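/- arXiv:math/0510193 — 5 statements merged into one kernel-verified Lean document; each statement's English description precedes it below -/
import Mathlib

section
/- If α ≻ (1,1) (i.e., α₁ > 1 and α₂ > 1) and β ⪯ α, then the space of multipliers from D_α to D_β is exactly D_β: M(D_α, D_β) = D_β. -/
open scoped BigOperators

/-- The open unit disc in ℂ. -/
def UnitDisc : Set ℂ := {z : ℂ | ‖z‖ < 1}

/-- The open unit bidisc in ℂ². -/
def UnitBidisc : Set (ℂ × ℂ) := {p : ℂ × ℂ | ‖p.1‖ < 1 ∧ ‖p.2‖ < 1}

/-- `a` is the double power series coefficient sequence of `f` on the bidisc. -/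
def IsCoeff (f : ℂ × ℂ → ℂ) (a : ℕ → ℕ → ℂ) : Prop :=
  ∀ p ∈ UnitBidisc,
    HasSum (fun kl : ℕ × ℕ => a kl.1 kl.2 * p.1 ^ kl.1 * p.2 ^ kl.2) (f p)

/-- Weighted squared-coefficient summand for the bidisc Dirichlet type space. -/
noncomputable def wt (a1 a2 : ℝ) (a : ℕ → ℕ → ℂ) (kl : ℕ × ℕ) : ℝ :=
  ‖a kl.1 kl.2‖ ^ 2 * ((kl.1 : ℝ) + 1) ^ a1 * ((kl.2 : ℝ) + 1) ^ a2

/-- Membership in the Dirichlet type space `D_{(a1,a2)}` on the bidisc. -/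
def MemD (a1 a2 : ℝ) (f : ℂ × ℂ → ℂ) : Prop :=
  ∃ a : ℕ → ℕ → ℂ, IsCoeff f a ∧ Summable (wt a1 a2 a)

/-- `b` is the power series coefficient sequence of `g` on the unit disc. -/
def IsCoeff1 (g : ℂ → ℂ) (b : ℕ → ℂ) : Prop :=
  ∀ z ∈ UnitDisc, HasSum (fun k : ℕ => b k * z ^ k) (g z)

/-- Weighted squared-coefficient summand for the one-variable Dirichlet type space. -/
noncomputable def wt1 (a : ℝ) (b : ℕ → ℂ) (k : ℕ) : ℝ :=
  ‖b k‖ ^ 2 * ((k : ℝ) + 1) ^ a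

/-- Membership in the one-variable Dirichlet type space `D_a` on the unit disc. -/
def MemD1 (a : ℝ) (g : ℂ → ℂ) : Prop :=
  ∃ b : ℕ → ℂ, IsCoeff1 g b ∧ Summable (wt1 a b)

/-- `φ` is a multiplier from `D_{(a1,a2)}` to `D_{(b1,b2)}` on the bidisc. -/
def MemM (a1 a2 b1 b2 : ℝ) (φ : ℂ × ℂ → ℂ) : Prop :=
  ∀ f : ℂ × ℂ → ℂ, MemD a1 a2 f → MemD b1 b2 (fun p => φ p * f p)

/-- `φ` is a multiplier from `D_a` to `D_b` on the unit disc. -/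
def MemM1 (a b : ℝ) (φ : ℂ → ℂ) : Prop :=
  ∀ g : ℂ → ℂ, MemD1 a g → MemD1 b (fun z => φ z * g z)

/-- The norm of the evaluation functional at `(z,w)` on `D_{(g1,g2)}`. -/
noncomputable def evalNorm (g1 g2 : ℝ) (z w : ℂ) : ℝ :=
  Real.sqrt (∑' kl : ℕ × ℕ,
    ‖z‖ ^ (2 * kl.1) * ‖w‖ ^ (2 * kl.2) *
      ((kl.1 : ℝ) + 1) ^ (-g1) * ((kl.2 : ℝ) + 1) ^ (-g2))

namespace S12
open ENNReal Finset

noncomputable def ew (r : ℝ) (k : ℕ) : ℝ≥0∞ := ENNReal.ofReal (((k : ℝ) + 1) ^ r)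

lemma base_pos (k : ℕ) : (0:ℝ) < (k:ℝ) + 1 := by positivity
lemma base_one_le (k : ℕ) : (1:ℝ) ≤ (k:ℝ) + 1 := by simp

lemma ew_ne_top (r : ℝ) (k : ℕ) : ew r k ≠ ∞ := ENNReal.ofReal_ne_top
lemma ew_pos (r : ℝ) (k : ℕ) : 0 < ew r k :=
  ENNReal.ofReal_pos.mpr (Real.rpow_pos_of_pos (base_pos k) r)
lemma ew_mul_ew (r s : ℝ) (k : ℕ) : ew r k * ew s k = ew (r + s) k := by
  rw [ew, ew, ew, ← ENNReal.ofReal_mul (Real.rpow_nonneg (base_pos k).le _),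
    ← Real.rpow_add (base_pos k)]
lemma ew_sq (r : ℝ) (k : ℕ) : (ew r k) ^ 2 = ew (2*r) k := by
  rw [sq, ew_mul_ew]; ring_nf
lemma ew_mul_ew_neg (r : ℝ) (k : ℕ) : ew r k * ew (-r) k = 1 := by
  rw [ew_mul_ew]; simp [ew]

lemma meas_nat (f : ℕ → ℝ≥0∞) : Measurable f := measurable_from_top

lemma rpow_two' (x : ℝ≥0∞) : x ^ (2:ℝ) = x ^ 2 := by
  rw [show (2:ℝ) = ((2:ℕ):ℝ) by norm_num, ENNReal.rpow_natCast]

lemma sq_rpow_half (x : ℝ≥0∞) : (x ^ (1/2:ℝ)) ^ 2 = x := by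
  rw [← rpow_two', ← ENNReal.rpow_mul]; norm_num

lemma half_mul_half (x : ℝ≥0∞) : x ^ (1/2:ℝ) * x ^ (1/2:ℝ) = x := by
  rw [← sq, sq_rpow_half]

/-- Cauchy–Schwarz for ENNReal tsums over ℕ. -/
lemma tsum_cs (f g : ℕ → ℝ≥0∞) :
    (∑' i, f i * g i) ^ 2 ≤ (∑' i, f i ^ 2) * (∑' i, g i ^ 2) := by
  have h2 : Real.HolderConjugate 2 2 := by constructor <;> norm_num
  have H := ENNReal.lintegral_mul_le_Lp_mul_Lq (MeasureTheory.Measure.count) h2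
    (meas_nat f).aemeasurable (meas_nat g).aemeasurable
  simp only [Pi.mul_apply, MeasureTheory.lintegral_count, rpow_two'] at H
  calc (∑' i, f i * g i) ^ 2
      ≤ ((∑' i, f i ^ 2) ^ (1/(2:ℝ)) * (∑' i, g i ^ 2) ^ (1/(2:ℝ))) ^ 2 := by
        exact pow_le_pow_left' H 2
    _ = _ := by rw [mul_pow, sq_rpow_half, sq_rpow_half]

/-- two-term Minkowski. -/
lemma mink2 (f g : ℕ → ℝ≥0∞) :
    (∑' k, (f k + g k) ^ 2) ^ (1/2:ℝ) ≤
      (∑' k, f k ^ 2) ^ (1/2:ℝ) + (∑' k, g k ^ 2) ^ (1/2:ℝ) := by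
  have H := ENNReal.lintegral_Lp_add_le (μ := MeasureTheory.Measure.count)
    (meas_nat f).aemeasurable (meas_nat g).aemeasurable (by norm_num : (1:ℝ) ≤ 2)
  simpa only [Pi.add_apply, MeasureTheory.lintegral_count, rpow_two'] using H

lemma mink_sum {ι : Type*} (s : Finset ι) (x : ι → ℕ → ℝ≥0∞) :
    (∑' k, (∑ t ∈ s, x t k) ^ 2) ^ (1/2:ℝ) ≤ ∑ t ∈ s, (∑' k, x t k ^ 2) ^ (1/2:ℝ) := by
  classical
  induction s using Finset.induction_on with
  | empty => simp
  | insert _ _ hnot ih =>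
    rename_i a s'
    simp only [Finset.sum_insert hnot]
    calc (∑' k, (x a k + ∑ t ∈ s', x t k) ^ 2) ^ (1/2:ℝ)
        ≤ (∑' k, x a k ^ 2) ^ (1/2:ℝ) + (∑' k, (∑ t ∈ s', x t k) ^ 2) ^ (1/2:ℝ) :=
          mink2 _ _
      _ ≤ _ := add_le_add_right ih _

lemma sq_add_le (x y : ℝ≥0∞) : (x + y) ^ 2 ≤ 3 * (x ^ 2 + y ^ 2) := by
  have hxy : x * y ≤ x ^ 2 + y ^ 2 := by
    rcases le_total x y with h | h
    · calc x * y ≤ y * y := mul_le_mul_left h y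
        _ ≤ _ := by rw [← sq]; exact le_add_self
    · calc x * y ≤ x * x := mul_le_mul_right h x
        _ ≤ _ := by rw [← sq]; exact le_self_add
  calc (x + y) ^ 2 = x ^ 2 + y ^ 2 + (x*y + x*y) := by ring
    _ ≤ x ^ 2 + y ^ 2 + ((x^2+y^2) + (x^2+y^2)) := by gcongr
    _ = 3 * (x ^ 2 + y ^ 2) := by ring

lemma tsum_shift (i : ℕ) (f : ℕ → ℝ≥0∞) :
    ∑' k, (if i ≤ k then f (k - i) else 0) = ∑' m, f m := by
  have hinj : Function.Injective (fun m : ℕ => i + m) := fun x y h => by simpa using h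
  have := hinj.tsum_eq (f := fun k => if i ≤ k then f (k - i) else 0) ?_
  · rw [← this]
    congr 1; funext m
    have hm : i ≤ i + m := Nat.le_add_right i m
    simp [hm]
  · intro x hx
    have hxi : i ≤ x := by
      by_contra h
      exact hx (by simp [h])
    exact ⟨x - i, by simp only []; omega⟩


/-- weight transfer when `k+1 ≤ 2(m+1)`, `m ≤ k`. -/
lemma ew_transfer {b : ℝ} {m k : ℕ} (hmk : m ≤ k) (h2 : (k:ℝ) + 1 ≤ 2 * ((m:ℝ) + 1)) :
    ew b k ≤ ENNReal.ofReal (2 ^ |b|) * ew b m := by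
  rw [ew, ew, ← ENNReal.ofReal_mul (by positivity)]
  apply ENNReal.ofReal_le_ofReal
  rcases le_or_gt 0 b with hb | hb
  · have h1 : ((k:ℝ)+1) ^ b ≤ (2 * ((m:ℝ)+1)) ^ b := Real.rpow_le_rpow (base_pos k).le h2 hb
    rw [Real.mul_rpow (by norm_num) (base_pos m).le] at h1
    calc ((k:ℝ)+1) ^ b ≤ 2 ^ b * ((m:ℝ)+1) ^ b := h1
      _ ≤ 2 ^ |b| * ((m:ℝ)+1) ^ b :=
          mul_le_mul_of_nonneg_right
            (Real.rpow_le_rpow_of_exponent_le (by norm_num) (le_abs_self b))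
            (Real.rpow_nonneg (base_pos m).le _)
  · have h1 : ((k:ℝ)+1) ^ b ≤ ((m:ℝ)+1) ^ b :=
      Real.rpow_le_rpow_of_nonpos (base_pos m) (by exact_mod_cast by omega : ((m:ℝ)+1) ≤ (k:ℝ)+1) hb.le
    calc ((k:ℝ)+1) ^ b ≤ ((m:ℝ)+1) ^ b := h1
      _ ≤ 2 ^ |b| * ((m:ℝ)+1) ^ b := by
          apply le_mul_of_one_le_left (Real.rpow_nonneg (base_pos m).le _)
          calc (1:ℝ) = 2 ^ (0:ℝ) := by norm_num
            _ ≤ 2 ^ |b| := Real.rpow_le_rpow_of_exponent_le (by norm_num) (abs_nonneg b)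

lemma ew_key2 {a b : ℝ} (ha : 1 < a) (hb : b ≤ a) {i m : ℕ} (him : i ≤ m) :
    ew (-b) i * ew b m ≤ ew (-((a+1)/2)) i * ew a m := by
  set p := (a+1)/2 with hp
  have hpa : p ≤ a := by rw [hp]; linarith
  have hmain : ((i:ℝ)+1) ^ (p - b) ≤ ((m:ℝ)+1) ^ (a - b) := by
    rcases le_or_gt b p with h | h
    · calc ((i:ℝ)+1) ^ (p - b) ≤ ((m:ℝ)+1) ^ (p - b) :=
            Real.rpow_le_rpow (base_pos i).le (by exact_mod_cast by omega) (by linarith)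
        _ ≤ ((m:ℝ)+1) ^ (a - b) :=
            Real.rpow_le_rpow_of_exponent_le (base_one_le m) (by linarith)
    · calc ((i:ℝ)+1) ^ (p - b) ≤ ((i:ℝ)+1) ^ (0:ℝ) :=
            Real.rpow_le_rpow_of_exponent_le (base_one_le i) (by linarith)
        _ = 1 := Real.rpow_zero _
        _ = ((m:ℝ)+1) ^ (0:ℝ) := (Real.rpow_zero _).symm
        _ ≤ ((m:ℝ)+1) ^ (a - b) :=
            Real.rpow_le_rpow_of_exponent_le (base_one_le m) (by linarith)
  rw [ew, ew, ew, ew, ← ENNReal.ofReal_mul (Real.rpow_nonneg (base_pos i).le _),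
    ← ENNReal.ofReal_mul (Real.rpow_nonneg (base_pos i).le _)]
  apply ENNReal.ofReal_le_ofReal
  have e1 : ((i:ℝ)+1) ^ (-b) = ((i:ℝ)+1) ^ (-p) * ((i:ℝ)+1) ^ (p - b) := by
    rw [← Real.rpow_add (base_pos i)]; ring_nf
  have e2 : ((m:ℝ)+1) ^ a = ((m:ℝ)+1) ^ (a-b) * ((m:ℝ)+1) ^ b := by
    rw [← Real.rpow_add (base_pos m)]; ring_nf
  rw [e1, e2]
  calc ((i:ℝ)+1) ^ (-p) * ((i:ℝ)+1) ^ (p-b) * ((m:ℝ)+1) ^ b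
      ≤ ((i:ℝ)+1) ^ (-p) * ((m:ℝ)+1) ^ (a-b) * ((m:ℝ)+1) ^ b :=
        mul_le_mul_of_nonneg_right
          (mul_le_mul_of_nonneg_left hmain (Real.rpow_nonneg (base_pos i).le _))
          (Real.rpow_nonneg (base_pos m).le _)
    _ = ((i:ℝ)+1) ^ (-p) * (((m:ℝ)+1) ^ (a-b) * ((m:ℝ)+1) ^ b) := by ring

lemma summable_base_neg {p : ℝ} (hp : 1 < p) : Summable (fun i : ℕ => ((i:ℝ)+1) ^ (-p)) := by
  have h0 : Summable (fun n : ℕ => 1 / (n:ℝ) ^ p) := Real.summable_one_div_nat_rpow.mpr hp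
  have h1 := (summable_nat_add_iff 1).mpr h0
  refine h1.congr fun n => ?_
  push_cast
  rw [Real.rpow_neg (base_pos n).le, one_div]

lemma tsum_ew_neg_ne_top {p : ℝ} (hp : 1 < p) : ∑' i, ew (-p) i ≠ ∞ := by
  have := ENNReal.ofReal_tsum_of_nonneg (f := fun i : ℕ => ((i:ℝ)+1) ^ (-p))
    (fun n => Real.rpow_nonneg (base_pos n).le _) (summable_base_neg hp)
  have heq : ∑' i, ew (-p) i = ENNReal.ofReal (∑' i : ℕ, ((i:ℝ)+1) ^ (-p)) := this.symm
  rw [heq]; exact ENNReal.ofReal_ne_top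
lemma ite_and_weaken (P Q : Prop) [Decidable P] [Decidable Q] (x : ℝ≥0∞) :
    (if P ∧ Q then x else 0) ≤ (if P then x else 0) := by
  by_cases hP : P <;> by_cases hQ : Q <;> simp [hP, hQ]

lemma swap_shift (F : ℕ → ℕ → ℝ≥0∞) :
    ∑' k, ∑' i, (if i ≤ k then F i (k - i) else 0) = ∑' i, ∑' m, F i m := by
  rw [ENNReal.tsum_comm]
  congr 1; funext i; exact tsum_shift i (F i)

/-- The 1-D core convolution estimate. -/
lemma core {a b : ℝ} (ha : 1 < a) (hb : b ≤ a) :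
    ∃ K : ℝ≥0∞, K ≠ ∞ ∧ ∀ A B : ℕ → ℝ≥0∞,
      ∑' k, (∑ i ∈ range (k+1), B i * A (k - i)) ^ 2 * ew b k ≤
        K * ((∑' i, (B i) ^ 2 * ew b i) * (∑' m, (A m) ^ 2 * ew a m)) := by
  classical
  set p := (a+1)/2 with hpdef
  have hp : 1 < p := by rw [hpdef]; linarith
  set c2 := ENNReal.ofReal (2 ^ |b|) with hc2
  set Zp := ∑' i, ew (-p) i with hZp
  set Za := ∑' i, ew (-a) i with hZa
  have hZpne : Zp ≠ ∞ := tsum_ew_neg_ne_top hp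
  have hZane : Za ≠ ∞ := tsum_ew_neg_ne_top ha
  refine ⟨3 * c2 * (Zp + Za), ?_, ?_⟩
  · exact ENNReal.mul_ne_top (ENNReal.mul_ne_top (by norm_num) ENNReal.ofReal_ne_top)
      (by simp [ENNReal.add_ne_top, hZpne, hZane])
  intro A B
  set SB := ∑' i, (B i) ^ 2 * ew b i with hSB
  set SA := ∑' m, (A m) ^ 2 * ew a m with hSA
  set l1A := ∑' m, A m with hl1A
  -- ℓ¹ bound on A
  have hl1 : l1A ^ 2 ≤ Za * SA := by
    have hpt : ∀ m, A m = (ew (-(a/2)) m) * (A m * ew (a/2) m) := by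
      intro m
      rw [mul_comm (A m) (ew (a/2) m), ← mul_assoc, mul_comm (ew (-(a/2)) m) (ew (a/2) m),
        ew_mul_ew]
      simp [ew]
    have hcs := tsum_cs (fun m => ew (-(a/2)) m) (fun m => A m * ew (a/2) m)
    have h1 : ∑' m, ew (-(a/2)) m * (A m * ew (a/2) m) = l1A := by
      rw [hl1A]; congr 1; funext m; exact (hpt m).symm
    have h2 : ∑' m, (ew (-(a/2)) m) ^ 2 = Za := by
      rw [hZa]; congr 1; funext m; rw [ew_sq, show 2*-(a/2) = -a by ring]
    have h3 : ∑' m, (A m * ew (a/2) m) ^ 2 = SA := by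
      rw [hSA]; congr 1; funext m; rw [mul_pow, ew_sq, show 2*(a/2) = a by ring]
    rw [h1, h2, h3] at hcs
    exact hcs
  -- split into L and R
  set L : ℕ → ℝ≥0∞ := fun k => ∑' i, (if 2*i ≤ k then B i * A (k-i) else 0) with hL
  set R : ℕ → ℝ≥0∞ := fun k => ∑' i, (if i ≤ k ∧ ¬ 2*i ≤ k then B i * A (k-i) else 0) with hR
  have hsplit : ∀ k, (∑ i ∈ range (k+1), B i * A (k - i)) = L k + R k := by
    intro k
    have h1 : (∑' i, (if i ≤ k then B i * A (k-i) else 0)) =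
        ∑ i ∈ range (k+1), B i * A (k - i) := by
      rw [tsum_eq_sum (s := range (k+1)) (fun i hi => by
        rw [if_neg]; intro hik; exact hi (mem_range.mpr (by omega)))]
      exact Finset.sum_congr rfl fun i hi => if_pos (by have := mem_range.mp hi; omega)
    simp only [hL, hR]
    rw [← h1, ← ENNReal.tsum_add]
    congr 1; funext i
    by_cases h2 : 2*i ≤ k
    · have hik : i ≤ k := by omega
      simp [h2, hik]
    · by_cases hik : i ≤ k <;> simp [h2, hik]
  -- TL bound
  have hTLk : ∀ k, (L k) ^ 2 * ew b k ≤
      SB * ∑' i, (if i ≤ k then (if i ≤ k - i then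
        (A (k-i)) ^ 2 * ew (-b) i * ew b (i + (k-i)) else 0) else 0) := by
    intro k
    set f1 : ℕ → ℝ≥0∞ := fun i => if 2*i ≤ k then B i * ew (b/2) i else 0 with hf1
    set f2 : ℕ → ℝ≥0∞ := fun i => if 2*i ≤ k then A (k-i) * ew (-(b/2)) i else 0 with hf2
    have hLk : L k = ∑' i, f1 i * f2 i := by
      simp only [hL]; congr 1; funext i
      by_cases h2 : 2*i ≤ k
      · rw [hf1, hf2]; simp only [if_pos h2]
        rw [mul_mul_mul_comm, ew_mul_ew]
        simp [ew]
      · simp [hf1, hf2, h2]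
    have hcs := tsum_cs f1 f2
    rw [← hLk] at hcs
    have hf1sq : ∑' i, (f1 i) ^ 2 ≤ SB := by
      rw [hSB]
      apply ENNReal.tsum_le_tsum
      intro i
      rw [hf1]
      by_cases h2 : 2*i ≤ k
      · simp only [if_pos h2, mul_pow, ew_sq]
        rw [show 2*(b/2) = b by ring]
      · simp [h2]
    have hf2sq : ∑' i, (f2 i) ^ 2 = ∑' i, (if 2*i ≤ k then
        (A (k-i)) ^ 2 * ew (-b) i else 0) := by
      congr 1; funext i
      rw [hf2]
      by_cases h2 : 2*i ≤ k
      · simp only [if_pos h2, mul_pow, ew_sq]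
        rw [show 2*(-(b/2)) = -b by ring]
      · simp [h2]
    calc (L k) ^ 2 * ew b k ≤ SB * (∑' i, (if 2*i ≤ k then (A (k-i)) ^ 2 * ew (-b) i else 0))
          * ew b k := by
          apply mul_le_mul_left
          calc (L k) ^ 2 ≤ (∑' i, (f1 i)^2) * (∑' i, (f2 i)^2) := hcs
            _ ≤ SB * (∑' i, (if 2*i ≤ k then (A (k-i)) ^ 2 * ew (-b) i else 0)) := by
                rw [← hf2sq]; exact mul_le_mul_left hf1sq _
      _ = SB * ∑' i, (if i ≤ k then (if i ≤ k - i then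
            (A (k-i)) ^ 2 * ew (-b) i * ew b (i + (k-i)) else 0) else 0) := by
          rw [mul_assoc]
          congr 1
          rw [← ENNReal.tsum_mul_right]
          congr 1; funext i
          by_cases h2 : 2*i ≤ k
          · have hik : i ≤ k := by omega
            have hii : i ≤ k - i := by omega
            have hkk : i + (k - i) = k := by omega
            rw [if_pos h2, if_pos hik, if_pos hii, hkk]
          · by_cases hik : i ≤ k
            · have hii : ¬ i ≤ k - i := by omega
              rw [if_neg h2, if_pos hik, if_neg hii, zero_mul]
            · rw [if_neg h2, if_neg hik, zero_mul]
  have hTL : ∑' k, (L k) ^ 2 * ew b k ≤ SB * (c2 * Zp * SA) := by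
    calc ∑' k, (L k) ^ 2 * ew b k
        ≤ ∑' k, SB * ∑' i, (if i ≤ k then (if i ≤ k - i then
            (A (k-i)) ^ 2 * ew (-b) i * ew b (i + (k-i)) else 0) else 0) :=
          ENNReal.tsum_le_tsum hTLk
      _ = SB * ∑' k, ∑' i, (if i ≤ k then (if i ≤ k - i then
            (A (k-i)) ^ 2 * ew (-b) i * ew b (i + (k-i)) else 0) else 0) :=
          ENNReal.tsum_mul_left
      _ = SB * ∑' i, ∑' m, (if i ≤ m then (A m) ^ 2 * ew (-b) i * ew b (i + m) else 0) := by
          rw [swap_shift (fun i m => if i ≤ m then (A m) ^ 2 * ew (-b) i * ew b (i + m) else 0)]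
      _ ≤ SB * ∑' i, ∑' m, (c2 * ew (-p) i) * ((A m) ^ 2 * ew a m) := by
          apply mul_le_mul_right
          apply ENNReal.tsum_le_tsum; intro i
          apply ENNReal.tsum_le_tsum; intro m
          by_cases him : i ≤ m
          · rw [if_pos him]
            calc (A m) ^ 2 * ew (-b) i * ew b (i + m)
                ≤ (A m) ^ 2 * ew (-b) i * (c2 * ew b m) := by
                  apply mul_le_mul_right
                  apply ew_transfer (by omega)
                  have hc : (i:ℝ) ≤ (m:ℝ) := Nat.cast_le.mpr him
                  push_cast
                  linarith
              _ = c2 * ((A m) ^ 2 * (ew (-b) i * ew b m)) := by ring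
              _ ≤ c2 * ((A m) ^ 2 * (ew (-p) i * ew a m)) := by
                  apply mul_le_mul_right
                  exact mul_le_mul_right (ew_key2 ha hb him) _
              _ = (c2 * ew (-p) i) * ((A m) ^ 2 * ew a m) := by ring
          · rw [if_neg him]; exact zero_le
      _ = SB * (c2 * Zp * SA) := by
          congr 1
          rw [hZp, hSA]
          calc ∑' i, ∑' m, (c2 * ew (-p) i) * ((A m) ^ 2 * ew a m)
              = ∑' i, (c2 * ew (-p) i) * ∑' m, ((A m) ^ 2 * ew a m) := by
                congr 1; funext i; exact ENNReal.tsum_mul_left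
            _ = (∑' i, c2 * ew (-p) i) * ∑' m, ((A m) ^ 2 * ew a m) := ENNReal.tsum_mul_right
            _ = c2 * (∑' i, ew (-p) i) * ∑' m, ((A m) ^ 2 * ew a m) := by
                rw [ENNReal.tsum_mul_left]
  -- TR bound
  have hTRk : ∀ k, (R k) ^ 2 * ew b k ≤
      l1A * (c2 * ∑' i, (if i ≤ k then (B i) ^ 2 * ew b i * A (k-i) else 0)) := by
    intro k
    set f1 : ℕ → ℝ≥0∞ := fun i =>
      if i ≤ k ∧ ¬ 2*i ≤ k then B i * (A (k-i)) ^ (1/2:ℝ) else 0 with hf1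
    set f2 : ℕ → ℝ≥0∞ := fun i =>
      if i ≤ k ∧ ¬ 2*i ≤ k then (A (k-i)) ^ (1/2:ℝ) else 0 with hf2
    have hRk : R k = ∑' i, f1 i * f2 i := by
      simp only [hR]; congr 1; funext i
      by_cases hc : i ≤ k ∧ ¬ 2*i ≤ k
      · rw [hf1, hf2]; simp only [if_pos hc]
        rw [mul_assoc, half_mul_half]
      · simp only [hf1, hf2, if_neg hc, zero_mul, mul_zero]
    have hcs := tsum_cs f1 f2
    rw [← hRk] at hcs
    have hf2sq : ∑' i, (f2 i) ^ 2 ≤ l1A := by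
      have heq : ∀ i, (f2 i) ^ 2 = (if i ≤ k ∧ ¬ 2*i ≤ k then A (k-i) else 0) := by
        intro i; rw [hf2]
        by_cases hc : i ≤ k ∧ ¬ 2*i ≤ k
        · simp only [if_pos hc, sq_rpow_half]
        · simp only [hf2, if_neg hc]
          exact zero_pow (by norm_num)
      calc ∑' i, (f2 i)^2 = ∑' i, (if i ≤ k ∧ ¬ 2*i ≤ k then A (k-i) else 0) := by
            congr 1; funext i; exact heq i
        _ ≤ ∑' i, (if i ≤ k then A (k-i) else 0) :=
            ENNReal.tsum_le_tsum fun i => ite_and_weaken _ _ _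
        _ = ∑ i ∈ range (k+1), A (k-i) := by
            rw [tsum_eq_sum (s := range (k+1)) (fun i hi => by
              rw [if_neg]; intro hik; exact hi (mem_range.mpr (by omega)))]
            exact Finset.sum_congr rfl fun i hi =>
              if_pos (by have := mem_range.mp hi; omega)
        _ = ∑ m ∈ range (k+1), A m := by
            rw [← Finset.sum_range_reflect]
            exact Finset.sum_congr rfl fun i hi => by
              congr 1; have := mem_range.mp hi; omega
        _ ≤ l1A := ENNReal.sum_le_tsum _
    have hf1sq : ∑' i, (f1 i) ^ 2 = ∑' i,
        (if i ≤ k ∧ ¬ 2*i ≤ k then (B i) ^ 2 * A (k-i) else 0) := by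
      congr 1; funext i; rw [hf1]
      by_cases hc : i ≤ k ∧ ¬ 2*i ≤ k
      · simp only [if_pos hc, mul_pow, sq_rpow_half]
      · simp only [hf1, if_neg hc]
        exact zero_pow (by norm_num)
    calc (R k) ^ 2 * ew b k
        ≤ ((∑' i, (if i ≤ k ∧ ¬ 2*i ≤ k then (B i) ^ 2 * A (k-i) else 0)) * l1A) * ew b k := by
          apply mul_le_mul_left
          calc (R k) ^ 2 ≤ (∑' i, (f1 i)^2) * (∑' i, (f2 i)^2) := hcs
            _ ≤ _ := by rw [hf1sq]; exact mul_le_mul_right hf2sq _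
      _ = l1A * ∑' i, (if i ≤ k ∧ ¬ 2*i ≤ k then (B i) ^ 2 * A (k-i) * ew b k else 0) := by
          rw [mul_comm _ l1A, mul_assoc]
          congr 1
          rw [← ENNReal.tsum_mul_right]
          congr 1; funext i
          by_cases hc : i ≤ k ∧ ¬ 2*i ≤ k
          · rw [if_pos hc, if_pos hc]
          · rw [if_neg hc, if_neg hc, zero_mul]
      _ ≤ l1A * (c2 * ∑' i, (if i ≤ k then (B i) ^ 2 * ew b i * A (k-i) else 0)) := by
          apply mul_le_mul_right
          rw [← ENNReal.tsum_mul_left]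
          apply ENNReal.tsum_le_tsum; intro i
          by_cases hc : i ≤ k ∧ ¬ 2*i ≤ k
          · rw [if_pos hc, if_pos hc.1]
            have hewk : ew b k ≤ c2 * ew b i := by
              apply ew_transfer hc.1
              have : (k:ℝ) < 2*(i:ℝ) := by exact_mod_cast by omega
              linarith
            calc (B i) ^ 2 * A (k-i) * ew b k ≤ (B i) ^ 2 * A (k-i) * (c2 * ew b i) :=
                  mul_le_mul_right hewk _
              _ = c2 * ((B i) ^ 2 * ew b i * A (k-i)) := by ring
          · rw [if_neg hc]
            exact zero_le
  have hTR : ∑' k, (R k) ^ 2 * ew b k ≤ c2 * (Za * SA * SB) := by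
    calc ∑' k, (R k) ^ 2 * ew b k
        ≤ ∑' k, l1A * (c2 * ∑' i, (if i ≤ k then (B i) ^ 2 * ew b i * A (k-i) else 0)) :=
          ENNReal.tsum_le_tsum hTRk
      _ = l1A * c2 * ∑' k, ∑' i, (if i ≤ k then (B i) ^ 2 * ew b i * A (k-i) else 0) := by
          rw [ENNReal.tsum_mul_left, ENNReal.tsum_mul_left, mul_assoc]
      _ = l1A * c2 * ∑' i, ∑' m, (B i) ^ 2 * ew b i * A m := by
          rw [swap_shift (fun i m => (B i) ^ 2 * ew b i * A m)]
      _ = l1A * c2 * (SB * l1A) := by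
          congr 1
          rw [hSB, hl1A]
          calc ∑' i, ∑' m, (B i) ^ 2 * ew b i * A m
              = ∑' i, ((B i) ^ 2 * ew b i) * ∑' m, A m := by
                congr 1; funext i; exact ENNReal.tsum_mul_left
            _ = (∑' i, (B i) ^ 2 * ew b i) * ∑' m, A m := ENNReal.tsum_mul_right
      _ = c2 * (l1A ^ 2 * SB) := by ring
      _ ≤ c2 * ((Za * SA) * SB) := by
          apply mul_le_mul_right
          exact mul_le_mul_left hl1 _
      _ = c2 * (Za * SA * SB) := by ring
  -- combine
  calc ∑' k, (∑ i ∈ range (k+1), B i * A (k - i)) ^ 2 * ew b k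
      = ∑' k, (L k + R k) ^ 2 * ew b k := by
        congr 1; funext k; rw [hsplit k]
    _ ≤ ∑' k, (3 * ((L k) ^ 2 + (R k) ^ 2)) * ew b k :=
        ENNReal.tsum_le_tsum fun k => mul_le_mul_left (sq_add_le _ _) _
    _ = 3 * ((∑' k, (L k) ^ 2 * ew b k) + (∑' k, (R k) ^ 2 * ew b k)) := by
        rw [← ENNReal.tsum_add, ← ENNReal.tsum_mul_left]
        congr 1; funext k; ring
    _ ≤ 3 * ((SB * (c2 * Zp * SA)) + c2 * (Za * SA * SB)) := by
        apply mul_le_mul_right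
        exact add_le_add hTL hTR
    _ = 3 * c2 * (Zp + Za) * (SB * SA) := by ring

lemma weighted_mink (b1 : ℝ) (s : Finset ℕ) (x : ℕ → ℕ → ℝ≥0∞) :
    (∑' k, (∑ t ∈ s, x t k) ^ 2 * ew b1 k) ^ (1/2:ℝ) ≤
      ∑ t ∈ s, (∑' k, (x t k) ^ 2 * ew b1 k) ^ (1/2:ℝ) := by
  have H := mink_sum s (fun t k => x t k * ew (b1/2) k)
  have e1 : ∑' k, (∑ t ∈ s, x t k) ^ 2 * ew b1 k
      = ∑' k, (∑ t ∈ s, x t k * ew (b1/2) k) ^ 2 := by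
    congr 1; funext k
    rw [← Finset.sum_mul, mul_pow, ew_sq, show 2*(b1/2) = b1 by ring]
  have e2 : ∀ t, (∑' k, (x t k) ^ 2 * ew b1 k) = ∑' k, (x t k * ew (b1/2) k) ^ 2 := by
    intro t; congr 1; funext k
    rw [mul_pow, ew_sq, show 2*(b1/2) = b1 by ring]
  rw [e1]
  refine le_trans H (le_of_eq ?_)
  exact Finset.sum_congr rfl fun t _ => by rw [e2 t]

lemma core2 {a1 a2 b1 b2 : ℝ} (h1 : 1 < a1) (h2 : 1 < a2) (hb1 : b1 ≤ a1) (hb2 : b2 ≤ a2)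
    (A B : ℕ → ℕ → ℝ≥0∞)
    (hB : (∑' ij : ℕ × ℕ, (B ij.1 ij.2) ^ 2 * ew b1 ij.1 * ew b2 ij.2) ≠ ∞)
    (hA : (∑' mn : ℕ × ℕ, (A mn.1 mn.2) ^ 2 * ew a1 mn.1 * ew a2 mn.2) ≠ ∞) :
    (∑' kl : ℕ × ℕ, (∑ i ∈ range (kl.1+1), ∑ j ∈ range (kl.2+1),
        B i j * A (kl.1 - i) (kl.2 - j)) ^ 2 * ew b1 kl.1 * ew b2 kl.2) ≠ ∞ := by
  obtain ⟨K1, hK1, hcore1⟩ := core h1 hb1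
  obtain ⟨K2, hK2, hcore2⟩ := core h2 hb2
  set Bj : ℕ → ℝ≥0∞ := fun j => ∑' i, (B i j) ^ 2 * ew b1 i with hBj
  set An : ℕ → ℝ≥0∞ := fun n => ∑' m, (A m n) ^ 2 * ew a1 m with hAn
  have hstep1 : ∀ j n, (∑' k, (∑ i ∈ range (k+1), B i j * A (k-i) n) ^ 2 * ew b1 k)
      ≤ K1 * (Bj j * An n) := fun j n => hcore1 (fun m => A m n) (fun i => B i j)
  have hstep2 : ∀ l : ℕ, (∑' k, (∑ i ∈ range (k+1), ∑ j ∈ range (l+1),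
      B i j * A (k-i) (l-j)) ^ 2 * ew b1 k)
      ≤ K1 * (∑ j ∈ range (l+1), (Bj j) ^ (1/2:ℝ) * (An (l-j)) ^ (1/2:ℝ)) ^ 2 := by
    intro l
    have hswap : ∀ k : ℕ, (∑ i ∈ range (k+1), ∑ j ∈ range (l+1), B i j * A (k-i) (l-j))
        = ∑ j ∈ range (l+1), ∑ i ∈ range (k+1), B i j * A (k-i) (l-j) :=
      fun k => Finset.sum_comm
    have hmk := weighted_mink b1 (range (l+1))
      (fun j k => ∑ i ∈ range (k+1), B i j * A (k-i) (l-j))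
    have hrhs : (∑ j ∈ range (l+1),
          (∑' k, (∑ i ∈ range (k+1), B i j * A (k-i) (l-j)) ^ 2 * ew b1 k) ^ (1/2:ℝ))
        ≤ ∑ j ∈ range (l+1), K1 ^ (1/2:ℝ) * ((Bj j) ^ (1/2:ℝ) * (An (l-j)) ^ (1/2:ℝ)) := by
      apply Finset.sum_le_sum; intro j _
      calc (∑' k, (∑ i ∈ range (k+1), B i j * A (k-i) (l-j)) ^ 2 * ew b1 k) ^ (1/2:ℝ)
          ≤ (K1 * (Bj j * An (l-j))) ^ (1/2:ℝ) :=
            ENNReal.rpow_le_rpow (hstep1 j (l-j)) (by norm_num)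
        _ = K1 ^ (1/2:ℝ) * ((Bj j) ^ (1/2:ℝ) * (An (l-j)) ^ (1/2:ℝ)) := by
            rw [ENNReal.mul_rpow_of_nonneg _ _ (by norm_num : (0:ℝ) ≤ 1/2),
              ENNReal.mul_rpow_of_nonneg _ _ (by norm_num : (0:ℝ) ≤ 1/2)]
    have hfin : (∑' k, (∑ i ∈ range (k+1), ∑ j ∈ range (l+1),
          B i j * A (k-i) (l-j)) ^ 2 * ew b1 k) ^ (1/2:ℝ)
        ≤ K1 ^ (1/2:ℝ) * ∑ j ∈ range (l+1), (Bj j) ^ (1/2:ℝ) * (An (l-j)) ^ (1/2:ℝ) := by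
      calc (∑' k, (∑ i ∈ range (k+1), ∑ j ∈ range (l+1),
            B i j * A (k-i) (l-j)) ^ 2 * ew b1 k) ^ (1/2:ℝ)
          = (∑' k, (∑ j ∈ range (l+1), ∑ i ∈ range (k+1),
            B i j * A (k-i) (l-j)) ^ 2 * ew b1 k) ^ (1/2:ℝ) := by
            congr 2; funext k; rw [hswap k]
        _ ≤ _ := hmk
        _ ≤ _ := hrhs
        _ = K1 ^ (1/2:ℝ) * ∑ j ∈ range (l+1), (Bj j) ^ (1/2:ℝ) * (An (l-j)) ^ (1/2:ℝ) := by
            rw [← Finset.mul_sum]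
    calc (∑' k, (∑ i ∈ range (k+1), ∑ j ∈ range (l+1),
          B i j * A (k-i) (l-j)) ^ 2 * ew b1 k)
        = ((∑' k, (∑ i ∈ range (k+1), ∑ j ∈ range (l+1),
          B i j * A (k-i) (l-j)) ^ 2 * ew b1 k) ^ (1/2:ℝ)) ^ 2 := (sq_rpow_half _).symm
      _ ≤ (K1 ^ (1/2:ℝ) * ∑ j ∈ range (l+1), (Bj j) ^ (1/2:ℝ) * (An (l-j)) ^ (1/2:ℝ)) ^ 2 :=
          pow_le_pow_left' hfin 2
      _ = K1 * (∑ j ∈ range (l+1), (Bj j) ^ (1/2:ℝ) * (An (l-j)) ^ (1/2:ℝ)) ^ 2 := by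
          rw [mul_pow, sq_rpow_half]
  -- identify the full sums
  have hBtot : (∑' ij : ℕ × ℕ, (B ij.1 ij.2) ^ 2 * ew b1 ij.1 * ew b2 ij.2)
      = ∑' j, Bj j * ew b2 j := by
    rw [ENNReal.tsum_prod']
    rw [ENNReal.tsum_comm]
    congr 1; funext j
    rw [hBj]
    simp only []
    rw [← ENNReal.tsum_mul_right]
  have hAtot : (∑' mn : ℕ × ℕ, (A mn.1 mn.2) ^ 2 * ew a1 mn.1 * ew a2 mn.2)
      = ∑' n, An n * ew a2 n := by
    rw [ENNReal.tsum_prod']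
    rw [ENNReal.tsum_comm]
    congr 1; funext n
    rw [hAn]
    simp only []
    rw [← ENNReal.tsum_mul_right]
  -- total
  have htot : (∑' kl : ℕ × ℕ, (∑ i ∈ range (kl.1+1), ∑ j ∈ range (kl.2+1),
        B i j * A (kl.1 - i) (kl.2 - j)) ^ 2 * ew b1 kl.1 * ew b2 kl.2)
      = ∑' l, (∑' k, (∑ i ∈ range (k+1), ∑ j ∈ range (l+1),
        B i j * A (k - i) (l - j)) ^ 2 * ew b1 k * ew b2 l) := by
    rw [ENNReal.tsum_prod']
    rw [ENNReal.tsum_comm]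
  have hle : (∑' kl : ℕ × ℕ, (∑ i ∈ range (kl.1+1), ∑ j ∈ range (kl.2+1),
        B i j * A (kl.1 - i) (kl.2 - j)) ^ 2 * ew b1 kl.1 * ew b2 kl.2)
      ≤ K1 * (K2 * ((∑' j, Bj j * ew b2 j) * (∑' n, An n * ew a2 n))) := by
    rw [htot]
    calc ∑' l, (∑' k, (∑ i ∈ range (k+1), ∑ j ∈ range (l+1),
          B i j * A (k - i) (l - j)) ^ 2 * ew b1 k * ew b2 l)
        = ∑' l, (∑' k, (∑ i ∈ range (k+1), ∑ j ∈ range (l+1),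
          B i j * A (k - i) (l - j)) ^ 2 * ew b1 k) * ew b2 l := by
          congr 1; funext l
          rw [← ENNReal.tsum_mul_right]
      _ ≤ ∑' l, (K1 * (∑ j ∈ range (l+1), (Bj j) ^ (1/2:ℝ) * (An (l-j)) ^ (1/2:ℝ)) ^ 2)
            * ew b2 l :=
          ENNReal.tsum_le_tsum fun l => mul_le_mul_left (hstep2 l) _
      _ = K1 * ∑' l, (∑ j ∈ range (l+1), (Bj j) ^ (1/2:ℝ) * (An (l-j)) ^ (1/2:ℝ)) ^ 2
            * ew b2 l := by
          rw [← ENNReal.tsum_mul_left]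
          congr 1; funext l; ring
      _ ≤ K1 * (K2 * ((∑' j, ((Bj j) ^ (1/2:ℝ)) ^ 2 * ew b2 j)
            * (∑' n, ((An n) ^ (1/2:ℝ)) ^ 2 * ew a2 n))) := by
          apply mul_le_mul_right
          exact hcore2 (fun n => (An n) ^ (1/2:ℝ)) (fun j => (Bj j) ^ (1/2:ℝ))
      _ = K1 * (K2 * ((∑' j, Bj j * ew b2 j) * (∑' n, An n * ew a2 n))) := by
          congr 3
          · congr 1; funext j; rw [sq_rpow_half]
          · congr 1; funext n; rw [sq_rpow_half]
  refine ne_top_of_le_ne_top ?_ hle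
  rw [← hBtot, ← hAtot]
  exact ENNReal.mul_ne_top hK1 (ENNReal.mul_ne_top hK2 (ENNReal.mul_ne_top hB hA))

/-- summability of `(k+1)^q * ρ^k` for `0 ≤ ρ < 1`. -/
lemma polyGeom (q : ℝ) {ρ : ℝ} (h0 : 0 ≤ ρ) (h1 : ρ < 1) :
    Summable (fun k : ℕ => ((k:ℝ)+1) ^ q * ρ ^ k) := by
  obtain ⟨N, hN⟩ := exists_nat_ge q
  have hb : Summable (fun k : ℕ => ((k:ℝ)+1) ^ N * ρ ^ k) := by
    have hexp : ∀ k : ℕ, ((k:ℝ)+1) ^ N * ρ ^ k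
        = ∑ j ∈ range (N+1), ((k:ℝ) ^ j * ρ ^ k * (N.choose j : ℝ)) := by
      intro k
      rw [add_pow]
      rw [Finset.sum_mul]
      exact Finset.sum_congr rfl fun j _ => by ring
    rw [funext hexp]
    apply summable_sum
    intro j hj
    have := summable_pow_mul_geometric_of_norm_lt_one (R := ℝ) j
      (r := ρ) (by rwa [Real.norm_eq_abs, abs_of_nonneg h0])
    have := this.mul_right ((N.choose j : ℝ))
    exact this.congr fun k => by ring
  apply Summable.of_nonneg_of_le (fun k => by positivity) (fun k => ?_) hb
  apply mul_le_mul_of_nonneg_right _ (by positivity)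
  calc ((k:ℝ)+1) ^ q ≤ ((k:ℝ)+1) ^ (N:ℝ) :=
        Real.rpow_le_rpow_of_exponent_le (base_one_le k) hN
    _ = ((k:ℝ)+1) ^ N := Real.rpow_natCast _ N

/-- coefficient bound from weighted square-summability. -/
lemma coeff_bound {r1 r2 : ℝ} {g : ℕ → ℕ → ℂ}
    (hg : Summable (fun kl : ℕ × ℕ => ‖g kl.1 kl.2‖ ^ 2 * ((kl.1:ℝ)+1) ^ r1 * ((kl.2:ℝ)+1) ^ r2)) :
    ∃ M : ℝ, 0 ≤ M ∧ ∀ k l : ℕ,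
      ‖g k l‖ ≤ M * ((k:ℝ)+1) ^ (|r1|/2) * ((l:ℝ)+1) ^ (|r2|/2) := by
  set W := ∑' kl : ℕ × ℕ, ‖g kl.1 kl.2‖ ^ 2 * ((kl.1:ℝ)+1) ^ r1 * ((kl.2:ℝ)+1) ^ r2 with hW
  have hWnn : 0 ≤ W := tsum_nonneg fun kl => by positivity
  refine ⟨Real.sqrt W, Real.sqrt_nonneg _, fun k l => ?_⟩
  have hterm : ‖g k l‖ ^ 2 * ((k:ℝ)+1) ^ r1 * ((l:ℝ)+1) ^ r2 ≤ W := by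
    have := Summable.le_tsum hg (k, l) (fun j _ => by positivity)
    exact this
  have hkey : ‖g k l‖ * (((k:ℝ)+1) ^ (r1/2) * ((l:ℝ)+1) ^ (r2/2)) ≤ Real.sqrt W := by
    apply Real.le_sqrt_of_sq_le
    calc (‖g k l‖ * (((k:ℝ)+1) ^ (r1/2) * ((l:ℝ)+1) ^ (r2/2))) ^ 2
        = ‖g k l‖ ^ 2 * ((((k:ℝ)+1) ^ (r1/2)) ^ 2 * (((l:ℝ)+1) ^ (r2/2)) ^ 2) := by ring
      _ = ‖g k l‖ ^ 2 * ((k:ℝ)+1) ^ r1 * ((l:ℝ)+1) ^ r2 := by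
          rw [← Real.rpow_natCast (((k:ℝ)+1) ^ (r1/2)) 2, ← Real.rpow_mul (base_pos k).le,
            ← Real.rpow_natCast (((l:ℝ)+1) ^ (r2/2)) 2, ← Real.rpow_mul (base_pos l).le]
          norm_num
          ring
      _ ≤ W := hterm
  have hpos : 0 < ((k:ℝ)+1) ^ (r1/2) * ((l:ℝ)+1) ^ (r2/2) :=
    mul_pos (Real.rpow_pos_of_pos (base_pos k) _) (Real.rpow_pos_of_pos (base_pos l) _)
  have h2 : ‖g k l‖ ≤ Real.sqrt W * (((k:ℝ)+1) ^ (-(r1/2)) * ((l:ℝ)+1) ^ (-(r2/2))) := by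
    rw [Real.rpow_neg (base_pos k).le, Real.rpow_neg (base_pos l).le, ← mul_inv]
    rw [← le_div_iff₀ hpos] at hkey
    rwa [div_eq_mul_inv] at hkey
  calc ‖g k l‖ ≤ Real.sqrt W * (((k:ℝ)+1) ^ (-(r1/2)) * ((l:ℝ)+1) ^ (-(r2/2))) := h2
    _ ≤ Real.sqrt W * (((k:ℝ)+1) ^ (|r1|/2) * ((l:ℝ)+1) ^ (|r2|/2)) := by
        apply mul_le_mul_of_nonneg_left _ (Real.sqrt_nonneg _)
        apply mul_le_mul
        · exact Real.rpow_le_rpow_of_exponent_le (base_one_le k) (by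
            have := neg_abs_le r1; linarith [abs_nonneg r1])
        · exact Real.rpow_le_rpow_of_exponent_le (base_one_le l) (by
            have := neg_abs_le r2; linarith [abs_nonneg r2])
        · exact (Real.rpow_pos_of_pos (base_pos l) _).le
        · exact (Real.rpow_pos_of_pos (base_pos k) _).le
    _ = Real.sqrt W * ((k:ℝ)+1) ^ (|r1|/2) * ((l:ℝ)+1) ^ (|r2|/2) := by ring

/-- absolute summability of the power series inside the bidisc. -/
lemma abs_summable {r1 r2 : ℝ} {g : ℕ → ℕ → ℂ}
    (hg : Summable (fun kl : ℕ × ℕ => ‖g kl.1 kl.2‖ ^ 2 * ((kl.1:ℝ)+1) ^ r1 * ((kl.2:ℝ)+1) ^ r2))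
    {z w : ℂ} (hz : ‖z‖ < 1) (hw : ‖w‖ < 1) :
    Summable (fun kl : ℕ × ℕ => ‖g kl.1 kl.2 * z ^ kl.1 * w ^ kl.2‖) := by
  obtain ⟨M, hM, hMb⟩ := coeff_bound hg
  have hsum1 : Summable (fun k : ℕ => ((k:ℝ)+1) ^ (|r1|/2) * ‖z‖ ^ k) :=
    polyGeom _ (norm_nonneg z) hz
  have hsum2 : Summable (fun l : ℕ => ((l:ℝ)+1) ^ (|r2|/2) * ‖w‖ ^ l) :=
    polyGeom _ (norm_nonneg w) hw
  have hprod : Summable (fun kl : ℕ × ℕ =>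
      (((kl.1:ℝ)+1) ^ (|r1|/2) * ‖z‖ ^ kl.1) * (((kl.2:ℝ)+1) ^ (|r2|/2) * ‖w‖ ^ kl.2)) :=
    hsum1.mul_of_nonneg hsum2 (fun k => by positivity) (fun l => by positivity)
  apply Summable.of_nonneg_of_le (fun kl => norm_nonneg _) (fun kl => ?_) (hprod.mul_left M)
  rw [norm_mul, norm_mul, norm_pow, norm_pow]
  calc ‖g kl.1 kl.2‖ * ‖z‖ ^ kl.1 * ‖w‖ ^ kl.2
      ≤ (M * ((kl.1:ℝ)+1) ^ (|r1|/2) * ((kl.2:ℝ)+1) ^ (|r2|/2)) * ‖z‖ ^ kl.1 * ‖w‖ ^ kl.2 := by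
        apply mul_le_mul_of_nonneg_right _ (by positivity)
        apply mul_le_mul_of_nonneg_right _ (by positivity)
        exact hMb kl.1 kl.2
    _ = M * ((((kl.1:ℝ)+1) ^ (|r1|/2) * ‖z‖ ^ kl.1) * (((kl.2:ℝ)+1) ^ (|r2|/2) * ‖w‖ ^ kl.2)) := by
        ring


def fibEquiv (k l : ℕ) : (Fin (k+1) × Fin (l+1)) ≃
    {t : (ℕ × ℕ) × (ℕ × ℕ) // (t.1.1 + t.2.1, t.1.2 + t.2.2) = (k, l)} where
  toFun := fun ij => ⟨((ij.1.1, ij.2.1), (k - ij.1.1, l - ij.2.1)), by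
    have h1 := ij.1.isLt
    have h2 := ij.2.isLt
    simp only [Prod.mk.injEq]
    constructor <;> omega⟩
  invFun := fun t => (⟨t.val.1.1, by
      have := t.prop
      simp only [Prod.mk.injEq] at this
      omega⟩, ⟨t.val.1.2, by
      have := t.prop
      simp only [Prod.mk.injEq] at this
      omega⟩)
  left_inv := fun ij => by ext <;> simp
  right_inv := fun t => by
    have := t.prop
    simp only [Prod.mk.injEq] at this
    apply Subtype.ext
    ext <;> simp <;> omega

lemma fibEquiv_val (k l : ℕ) (i : Fin (k+1)) (j : Fin (l+1)) :
    ((fibEquiv k l) (i, j)).val = ((i.1, j.1), (k - i.1, l - j.1)) := rfl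

set_option maxHeartbeats 1000000 in
lemma conv_hasSum {g h : ℕ → ℕ → ℂ} {z w : ℂ}
    (hgs : Summable (fun kl : ℕ × ℕ => ‖g kl.1 kl.2 * z ^ kl.1 * w ^ kl.2‖))
    (hhs : Summable (fun kl : ℕ × ℕ => ‖h kl.1 kl.2 * z ^ kl.1 * w ^ kl.2‖))
    {G H : ℂ} (hG : HasSum (fun kl : ℕ × ℕ => g kl.1 kl.2 * z ^ kl.1 * w ^ kl.2) G)
    (hH : HasSum (fun kl : ℕ × ℕ => h kl.1 kl.2 * z ^ kl.1 * w ^ kl.2) H) :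
    HasSum (fun kl : ℕ × ℕ => (∑ i ∈ range (kl.1+1), ∑ j ∈ range (kl.2+1),
      g i j * h (kl.1-i) (kl.2-j)) * z ^ kl.1 * w ^ kl.2) (G * H) := by
  classical
  set F : (ℕ × ℕ) × (ℕ × ℕ) → ℂ := fun t =>
    (g t.1.1 t.1.2 * z ^ t.1.1 * w ^ t.1.2) * (h t.2.1 t.2.2 * z ^ t.2.1 * w ^ t.2.2) with hF
  have hFsum : Summable F := by
    exact summable_mul_of_summable_norm
      (f := fun kl : ℕ × ℕ => g kl.1 kl.2 * z ^ kl.1 * w ^ kl.2)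
      (g := fun kl : ℕ × ℕ => h kl.1 kl.2 * z ^ kl.1 * w ^ kl.2) hgs hhs
  have hFS : HasSum F (G * H) := by
    exact HasSum.mul
      (f := fun kl : ℕ × ℕ => g kl.1 kl.2 * z ^ kl.1 * w ^ kl.2)
      (g := fun kl : ℕ × ℕ => h kl.1 kl.2 * z ^ kl.1 * w ^ kl.2) hG hH hFsum
  set q : (ℕ × ℕ) × (ℕ × ℕ) → ℕ × ℕ := fun t => (t.1.1 + t.2.1, t.1.2 + t.2.2) with hq
  have hsig : HasSum (fun x : Σ kl : ℕ × ℕ, {t // q t = kl} => F x.2.val) (G * H) := by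
    exact (Equiv.sigmaFiberEquiv q).hasSum_iff.mpr hFS
  apply hsig.sigma
  rintro ⟨k, l⟩
  have hfin : HasSum (fun ij : Fin (k+1) × Fin (l+1) => F ((fibEquiv k l) ij).val)
      ((∑ i ∈ range (k+1), ∑ j ∈ range (l+1), g i j * h (k-i) (l-j)) * z ^ k * w ^ l) := by
    have h0 := hasSum_fintype (fun ij : Fin (k+1) × Fin (l+1) => F ((fibEquiv k l) ij).val)
    convert h0 using 1
    rw [Fintype.sum_prod_type]
    have hterm : ∀ (i : Fin (k+1)) (j : Fin (l+1)), F ((fibEquiv k l) (i, j)).val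
        = g i.1 j.1 * h (k - i.1) (l - j.1) * z ^ k * w ^ l := by
      intro i j
      have hik : (i.1 : ℕ) + (k - i.1) = k := by have := i.isLt; omega
      have hjl : (j.1 : ℕ) + (l - j.1) = l := by have := j.isLt; omega
      have hval : ((fibEquiv k l) (i, j)).val = ((i.1, j.1), (k - i.1, l - j.1)) := fibEquiv_val k l i j
      rw [hval, hF]
      calc (g i.1 j.1 * z ^ i.1 * w ^ j.1) *
            (h (k - i.1) (l - j.1) * z ^ (k - i.1) * w ^ (l - j.1))
          = g i.1 j.1 * h (k - i.1) (l - j.1) * (z ^ i.1 * z ^ (k - i.1))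
              * (w ^ j.1 * w ^ (l - j.1)) := by ring
        _ = g i.1 j.1 * h (k - i.1) (l - j.1) * z ^ k * w ^ l := by
            rw [← pow_add, ← pow_add, hik, hjl]
    calc (∑ i ∈ range (k+1), ∑ j ∈ range (l+1), g i j * h (k-i) (l-j)) * z ^ k * w ^ l
        = ∑ i ∈ range (k+1), ∑ j ∈ range (l+1),
            g i j * h (k-i) (l-j) * z ^ k * w ^ l := by
          rw [Finset.sum_mul, Finset.sum_mul]
          apply Finset.sum_congr rfl; intro i _
          rw [Finset.sum_mul, Finset.sum_mul]
      _ = ∑ i : Fin (k+1), ∑ j : Fin (l+1), g i.1 j.1 * h (k-i.1) (l-j.1) * z ^ k * w ^ l := by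
          rw [← Fin.sum_univ_eq_sum_range (fun i => ∑ j ∈ range (l+1),
            g i j * h (k-i) (l-j) * z ^ k * w ^ l) (k+1)]
          apply Finset.sum_congr rfl; intro i _
          rw [← Fin.sum_univ_eq_sum_range (fun j => g i.1 j * h (k-i.1) (l-j) * z ^ k * w ^ l)
            (l+1)]
      _ = ∑ i : Fin (k+1), ∑ j : Fin (l+1), F ((fibEquiv k l) (i, j)).val := by
          apply Finset.sum_congr rfl; intro i _
          apply Finset.sum_congr rfl; intro j _
          rw [hterm i j]
  exact (fibEquiv k l).hasSum_iff.mp hfin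

lemma wt_nonneg (r1 r2 : ℝ) (g : ℕ → ℕ → ℂ) (kl : ℕ × ℕ) : 0 ≤ wt r1 r2 g kl := by
  unfold wt
  have h1 : (0:ℝ) < ((kl.1:ℝ)+1) ^ r1 := Real.rpow_pos_of_pos (base_pos kl.1) _
  have h2 : (0:ℝ) < ((kl.2:ℝ)+1) ^ r2 := Real.rpow_pos_of_pos (base_pos kl.2) _
  positivity

lemma ofReal_wt_sum {r1 r2 : ℝ} {g : ℕ → ℕ → ℂ} (hg : Summable (wt r1 r2 g)) :
    (∑' kl : ℕ × ℕ, (ENNReal.ofReal ‖g kl.1 kl.2‖) ^ 2 * ew r1 kl.1 * ew r2 kl.2) ≠ ∞ := by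
  have heq : ∀ kl : ℕ × ℕ, (ENNReal.ofReal ‖g kl.1 kl.2‖) ^ 2 * ew r1 kl.1 * ew r2 kl.2
      = ENNReal.ofReal (wt r1 r2 g kl) := by
    intro kl
    rw [wt, ← ENNReal.ofReal_pow (norm_nonneg _), ew, ew,
      ← ENNReal.ofReal_mul (by positivity), ← ENNReal.ofReal_mul (by positivity)]
  rw [tsum_congr heq, ← ENNReal.ofReal_tsum_of_nonneg (wt_nonneg r1 r2 g) hg]
  exact ENNReal.ofReal_ne_top

lemma memD_mul {a1 a2 b1 b2 : ℝ} (h1 : 1 < a1) (h2 : 1 < a2) (hb1 : b1 ≤ a1) (hb2 : b2 ≤ a2)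
    {φ f : ℂ × ℂ → ℂ} (hφ : MemD b1 b2 φ) (hf : MemD a1 a2 f) :
    MemD b1 b2 (fun p => φ p * f p) := by
  obtain ⟨b, hbc, hbs⟩ := hφ
  obtain ⟨a, hac, has⟩ := hf
  have hbs' : Summable (fun kl : ℕ × ℕ =>
      ‖b kl.1 kl.2‖ ^ 2 * ((kl.1:ℝ)+1) ^ b1 * ((kl.2:ℝ)+1) ^ b2) := hbs
  have has' : Summable (fun kl : ℕ × ℕ =>
      ‖a kl.1 kl.2‖ ^ 2 * ((kl.1:ℝ)+1) ^ a1 * ((kl.2:ℝ)+1) ^ a2) := has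
  refine ⟨fun k l => ∑ i ∈ range (k+1), ∑ j ∈ range (l+1), b i j * a (k-i) (l-j), ?_, ?_⟩
  · intro p hp
    exact conv_hasSum (abs_summable hbs' hp.1 hp.2) (abs_summable has' hp.1 hp.2)
      (hbc p hp) (hac p hp)
  · -- summability of the weights
    have hB := ofReal_wt_sum hbs
    have hA := ofReal_wt_sum has
    have hcore := core2 h1 h2 hb1 hb2 (fun m n => ENNReal.ofReal ‖a m n‖)
      (fun i j => ENNReal.ofReal ‖b i j‖) hB hA
    set c : ℕ → ℕ → ℂ :=
      fun k l => ∑ i ∈ range (k+1), ∑ j ∈ range (l+1), b i j * a (k-i) (l-j) with hc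
    have hcle : ∀ k l : ℕ, ENNReal.ofReal ‖c k l‖ ≤
        ∑ i ∈ range (k+1), ∑ j ∈ range (l+1),
          ENNReal.ofReal ‖b i j‖ * ENNReal.ofReal ‖a (k-i) (l-j)‖ := by
      intro k l
      have hn : ‖c k l‖ ≤ ∑ i ∈ range (k+1), ∑ j ∈ range (l+1),
          ‖b i j‖ * ‖a (k-i) (l-j)‖ := by
        rw [hc]
        calc ‖∑ i ∈ range (k+1), ∑ j ∈ range (l+1), b i j * a (k-i) (l-j)‖
            ≤ ∑ i ∈ range (k+1), ‖∑ j ∈ range (l+1), b i j * a (k-i) (l-j)‖ :=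
              norm_sum_le _ _
          _ ≤ ∑ i ∈ range (k+1), ∑ j ∈ range (l+1), ‖b i j * a (k-i) (l-j)‖ :=
              Finset.sum_le_sum fun i _ => norm_sum_le _ _
          _ = ∑ i ∈ range (k+1), ∑ j ∈ range (l+1), ‖b i j‖ * ‖a (k-i) (l-j)‖ :=
              Finset.sum_congr rfl fun i _ => Finset.sum_congr rfl fun j _ => norm_mul _ _
      calc ENNReal.ofReal ‖c k l‖
          ≤ ENNReal.ofReal (∑ i ∈ range (k+1), ∑ j ∈ range (l+1),
            ‖b i j‖ * ‖a (k-i) (l-j)‖) := ENNReal.ofReal_le_ofReal hn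
        _ = ∑ i ∈ range (k+1), ∑ j ∈ range (l+1),
            ENNReal.ofReal ‖b i j‖ * ENNReal.ofReal ‖a (k-i) (l-j)‖ := by
            rw [ENNReal.ofReal_sum_of_nonneg (fun i _ => by positivity)]
            apply Finset.sum_congr rfl; intro i _
            rw [ENNReal.ofReal_sum_of_nonneg (fun j _ => by positivity)]
            apply Finset.sum_congr rfl; intro j _
            rw [ENNReal.ofReal_mul (norm_nonneg _)]
    have hle : ∀ kl : ℕ × ℕ, ENNReal.ofReal (wt b1 b2 c kl) ≤
        (∑ i ∈ range (kl.1+1), ∑ j ∈ range (kl.2+1),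
          ENNReal.ofReal ‖b i j‖ * ENNReal.ofReal ‖a (kl.1-i) (kl.2-j)‖) ^ 2
          * ew b1 kl.1 * ew b2 kl.2 := by
      intro kl
      have heq : ENNReal.ofReal (wt b1 b2 c kl)
          = (ENNReal.ofReal ‖c kl.1 kl.2‖) ^ 2 * ew b1 kl.1 * ew b2 kl.2 := by
        rw [wt, ← ENNReal.ofReal_pow (norm_nonneg _), ew, ew,
          ← ENNReal.ofReal_mul (by positivity), ← ENNReal.ofReal_mul (by positivity)]
      rw [heq]
      apply mul_le_mul_left
      apply mul_le_mul_left
      exact pow_le_pow_left' (hcle kl.1 kl.2) 2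
    have hfin : (∑' kl : ℕ × ℕ, ENNReal.ofReal (wt b1 b2 c kl)) ≠ ∞ :=
      ne_top_of_le_ne_top hcore (ENNReal.tsum_le_tsum hle)
    have hsum := ENNReal.summable_toReal hfin
    exact hsum.congr fun kl => ENNReal.toReal_ofReal (wt_nonneg _ _ _ kl)

lemma memD_one (a1 a2 : ℝ) : MemD a1 a2 (fun _ => 1) := by
  classical
  refine ⟨fun k l => if k = 0 ∧ l = 0 then 1 else 0, ?_, ?_⟩
  · intro p hp
    have he : (fun kl : ℕ × ℕ =>
        (if kl.1 = 0 ∧ kl.2 = 0 then (1:ℂ) else 0) * p.1 ^ kl.1 * p.2 ^ kl.2)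
        = fun kl : ℕ × ℕ => if kl = ((0,0) : ℕ × ℕ) then (1:ℂ) else 0 := by
      funext kl
      by_cases hkl : kl = ((0,0) : ℕ × ℕ)
      · rw [hkl]; norm_num
      · have hnc : ¬(kl.1 = 0 ∧ kl.2 = 0) := by
          intro hcc
          exact hkl (Prod.ext hcc.1 hcc.2)
        rw [if_neg hnc, if_neg hkl, zero_mul, zero_mul]
    rw [he]
    exact hasSum_ite_eq ((0,0) : ℕ × ℕ) 1
  · apply summable_of_ne_finset_zero (s := ({((0,0) : ℕ × ℕ)} : Finset (ℕ × ℕ)))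
    intro kl hkl
    have hnc : ¬(kl.1 = 0 ∧ kl.2 = 0) := by
      intro hcc
      exact hkl (by simp [Prod.ext_iff, hcc.1, hcc.2])
    unfold wt
    simp only [if_neg hnc]
    simp

end S12


/-- if `α ≻ (1,1)` and `β ⪯ α`, then `M(D_α, D_β) = D_β`. -/
theorem stmt12 (a1 a2 b1 b2 : ℝ) (h1 : 1 < a1) (h2 : 1 < a2)
    (hb1 : b1 ≤ a1) (hb2 : b2 ≤ a2) (φ : ℂ × ℂ → ℂ) :
    MemM a1 a2 b1 b2 φ ↔ MemD b1 b2 φ := by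
  constructor
  · intro hM
    have h := hM (fun _ => 1) (S12.memD_one a1 a2)
    have he : (fun p : ℂ × ℂ => φ p * (fun _ : ℂ × ℂ => (1:ℂ)) p) = φ :=
      funext fun p => mul_one _
    rwa [he] at h
  · intro hφ f hf
    exact S12.memD_mul h1 h2 hb1 hb2 hφ hf
end

section
/- For α₁ > 1 and β₁ ≤ α₁, there is a constant C depending only on α₁ such that for all nonnegative integers k: (k+1)^{β₁} · Σ_{m=0}^{k} 1/((m+1)^{α₁} (k-m+1)^{β₁}) ≤ C. -/
open scoped BigOperators

lemma key_pt (a1 b1 : ℝ) (h1 : 1 < a1) (hb : b1 ≤ a1) {A B K : ℝ}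
    (hA : 1 ≤ A) (hB : 1 ≤ B) (hK : K = A + B - 1) :
    K ^ b1 * (1 / (A ^ a1 * B ^ b1)) ≤ 2 ^ a1 * (1 / A ^ a1 + 1 / B ^ a1) := by
  have hA0 : (0:ℝ) < A := by linarith
  have hB0 : (0:ℝ) < B := by linarith
  have hK0 : (0:ℝ) < K := by nlinarith
  have hApow : (0:ℝ) < A ^ a1 := Real.rpow_pos_of_pos hA0 _
  have hBpow : (0:ℝ) < B ^ a1 := Real.rpow_pos_of_pos hB0 _
  have hBpb : (0:ℝ) < B ^ b1 := Real.rpow_pos_of_pos hB0 _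
  have hKB : 1 ≤ K / B := by rw [le_div_iff₀ hB0]; nlinarith
  have step1 : K ^ b1 * (1 / (A ^ a1 * B ^ b1)) = (K / B) ^ b1 / A ^ a1 := by
    rw [Real.div_rpow hK0.le hB0.le]; field_simp
  have step2 : (K / B) ^ b1 ≤ (K / B) ^ a1 :=
    Real.rpow_le_rpow_of_exponent_le hKB hb
  have step3 : (K / B) ^ a1 = K ^ a1 / B ^ a1 := Real.div_rpow hK0.le hB0.le a1
  rw [step1]
  have main : K ^ a1 / B ^ a1 / A ^ a1 ≤ 2 ^ a1 * (1 / A ^ a1 + 1 / B ^ a1) := by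
    rcases le_total A B with h | h
    · have hK2 : K ≤ 2 * B := by linarith
      have : K ^ a1 ≤ (2 * B) ^ a1 := Real.rpow_le_rpow hK0.le hK2 (by linarith)
      have h2B : (2 * B : ℝ) ^ a1 = 2 ^ a1 * B ^ a1 :=
        Real.mul_rpow (by norm_num) hB0.le
      calc K ^ a1 / B ^ a1 / A ^ a1 ≤ 2 ^ a1 * B ^ a1 / B ^ a1 / A ^ a1 := by
            rw [h2B] at this; gcongr
        _ = 2 ^ a1 * (1 / A ^ a1) := by field_simp
        _ ≤ 2 ^ a1 * (1 / A ^ a1 + 1 / B ^ a1) := by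
            have : (0:ℝ) < 2 ^ a1 := Real.rpow_pos_of_pos (by norm_num) _
            nlinarith [one_div_pos.2 hBpow]
    · have hK2 : K ≤ 2 * A := by linarith
      have : K ^ a1 ≤ (2 * A) ^ a1 := Real.rpow_le_rpow hK0.le hK2 (by linarith)
      have h2A : (2 * A : ℝ) ^ a1 = 2 ^ a1 * A ^ a1 :=
        Real.mul_rpow (by norm_num) hA0.le
      calc K ^ a1 / B ^ a1 / A ^ a1 ≤ 2 ^ a1 * A ^ a1 / B ^ a1 / A ^ a1 := by
            rw [h2A] at this; gcongr
        _ = 2 ^ a1 * (1 / B ^ a1) := by field_simp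
        _ ≤ 2 ^ a1 * (1 / A ^ a1 + 1 / B ^ a1) := by
            have : (0:ℝ) < 2 ^ a1 := Real.rpow_pos_of_pos (by norm_num) _
            nlinarith [one_div_pos.2 hApow]
  calc (K / B) ^ b1 / A ^ a1 ≤ (K / B) ^ a1 / A ^ a1 := by gcongr
    _ = K ^ a1 / B ^ a1 / A ^ a1 := by rw [step3]
    _ ≤ _ := main

/-- key combinatorial inequality. -/
theorem stmt13 (a1 b1 : ℝ) (h1 : 1 < a1) (hb : b1 ≤ a1) :
    ∃ C : ℝ, ∀ k : ℕ,
      ((k : ℝ) + 1) ^ b1 *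
        ∑ m ∈ Finset.range (k + 1),
          1 / (((m : ℝ) + 1) ^ a1 * (((k - m : ℕ) : ℝ) + 1) ^ b1) ≤ C := by
  have hsum : Summable (fun n : ℕ => 1 / ((n : ℝ) + 1) ^ a1) := by
    have h := Real.summable_one_div_nat_rpow.2 h1
    have h2 := (summable_nat_add_iff 1).2 h
    convert h2 using 2 with n
    push_cast
    case e'_5 => norm_num
    case e'_3 => rfl
  set T := ∑' n : ℕ, 1 / ((n : ℝ) + 1) ^ a1 with hT
  have hterm_nn : ∀ n : ℕ, 0 ≤ 1 / ((n : ℝ) + 1) ^ a1 := fun n =>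
    one_div_nonneg.2 (Real.rpow_nonneg (by positivity) _)
  refine ⟨2 ^ a1 * (T + T), fun k => ?_⟩
  rw [Finset.mul_sum]
  have hpart : ∀ s : Finset ℕ, ∑ m ∈ s, 1 / ((m : ℝ) + 1) ^ a1 ≤ T :=
    fun s => Summable.sum_le_tsum s (fun i _ => hterm_nn i) hsum
  calc ∑ m ∈ Finset.range (k + 1),
        ((k : ℝ) + 1) ^ b1 * (1 / (((m : ℝ) + 1) ^ a1 * (((k - m : ℕ) : ℝ) + 1) ^ b1))
      ≤ ∑ m ∈ Finset.range (k + 1),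
          2 ^ a1 * (1 / ((m : ℝ) + 1) ^ a1 + 1 / (((k - m : ℕ) : ℝ) + 1) ^ a1) := by
        refine Finset.sum_le_sum fun m hm => ?_
        have hmk : m ≤ k := Nat.lt_succ_iff.1 (Finset.mem_range.1 hm)
        refine key_pt a1 b1 h1 hb ?_ ?_ ?_
        · have := Nat.cast_nonneg (α := ℝ) m; linarith
        · have := Nat.cast_nonneg (α := ℝ) (k - m); linarith
        · have : ((k - m : ℕ) : ℝ) = (k : ℝ) - m := by
            rw [Nat.cast_sub hmk]
          rw [this]; ring
    _ = 2 ^ a1 * (∑ m ∈ Finset.range (k + 1), 1 / ((m : ℝ) + 1) ^ a1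
          + ∑ m ∈ Finset.range (k + 1), 1 / (((k - m : ℕ) : ℝ) + 1) ^ a1) := by
        rw [← Finset.mul_sum, Finset.sum_add_distrib]
    _ ≤ 2 ^ a1 * (T + T) := by
        have h2 : ∑ m ∈ Finset.range (k + 1), 1 / (((k - m : ℕ) : ℝ) + 1) ^ a1
            = ∑ m ∈ Finset.range (k + 1), 1 / ((m : ℝ) + 1) ^ a1 := by
          have := Finset.sum_range_reflect (fun m => 1 / ((m : ℝ) + 1) ^ a1) (k + 1)
          simpa using this
        rw [h2]
        have hp : (0:ℝ) ≤ 2 ^ a1 := (Real.rpow_pos_of_pos (by norm_num) _).le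
        have := hpart (Finset.range (k + 1))
        nlinarith
end

section
/- If f ∈ D_{(α₁,α₂)} on the unit bidisc and w₀ ∈ 𝕌 is fixed, then the slice function f_{w₀}(z) = f(z, w₀) belongs to the one-variable Dirichlet type space D_{α₁} on the unit disc; moreover ‖f_{w₀}‖²_{α₁} ≤ (1-|w₀|)^{-1}(C_{w₀} + ‖f‖²_α) for some finite constant C_{w₀}. -/
open scoped BigOperators

lemma summable_rpow_mul_geometric (c t : ℝ) (ht0 : 0 ≤ t) (ht1 : t < 1) :
    Summable (fun l : ℕ => ((l : ℝ) + 1) ^ c * t ^ l) := by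
  obtain ⟨n, hn⟩ := exists_nat_ge c
  set s : ℝ := (1 + t) / 2 with hsdef
  have hs0 : 0 < s := by positivity
  have hts : t ≤ s := by rw [hsdef]; linarith
  have hs1 : s < 1 := by rw [hsdef]; linarith
  have hsum : Summable (fun l : ℕ => ((l : ℝ)) ^ n * s ^ l) :=
    summable_pow_mul_geometric_of_norm_lt_one n
      (by rwa [Real.norm_eq_abs, abs_of_pos hs0])
  have hsum1 : Summable (fun l : ℕ => ((l : ℝ) + 1) ^ n * s ^ (l + 1)) := by
    have := (summable_nat_add_iff 1).2 hsum
    refine this.congr fun l => ?_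
    push_cast
    ring
  have hsum2 : Summable (fun l : ℕ => ((l : ℝ) + 1) ^ n * s ^ l) := by
    refine (hsum1.mul_left s⁻¹).congr fun l => ?_
    rw [pow_succ]
    field_simp
  refine Summable.of_nonneg_of_le (fun l => ?_) (fun l => ?_) hsum2
  · positivity
  · have h2 : ((l : ℝ) + 1) ^ c ≤ ((l : ℝ) + 1) ^ (n : ℝ) :=
      Real.rpow_le_rpow_of_exponent_le (by norm_num) hn
    rw [Real.rpow_natCast] at h2
    exact mul_le_mul h2 (pow_le_pow_left₀ ht0 hts l) (by positivity) (by positivity)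

lemma tsum_mul_le_sqrt_mul_sqrt (u v : ℕ → ℝ) (hu : ∀ l, 0 ≤ u l) (hv : ∀ l, 0 ≤ v l)
    (hu2 : Summable (fun l => u l ^ 2)) (hv2 : Summable (fun l => v l ^ 2)) :
    (∑' l, u l * v l) ≤ Real.sqrt (∑' l, u l ^ 2) * Real.sqrt (∑' l, v l ^ 2) := by
  have huv : Summable (fun l => u l * v l) := by
    refine Summable.of_nonneg_of_le (fun l => mul_nonneg (hu l) (hv l))
      (fun l => ?_) ((hu2.add hv2).div_const 2)
    nlinarith [sq_nonneg (u l - v l)]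
  refine Summable.tsum_le_of_sum_le huv fun s => ?_
  have h1 : (∑ i ∈ s, u i * v i) ^ 2 ≤ (∑ i ∈ s, u i ^ 2) * (∑ i ∈ s, v i ^ 2) :=
    Finset.sum_mul_sq_le_sq_mul_sq s u v
  have h2 : ∑ i ∈ s, u i ^ 2 ≤ ∑' l, u l ^ 2 := Summable.sum_le_tsum s (fun i _ => sq_nonneg _) hu2
  have h3 : ∑ i ∈ s, v i ^ 2 ≤ ∑' l, v l ^ 2 := Summable.sum_le_tsum s (fun i _ => sq_nonneg _) hv2
  have hU : (0:ℝ) ≤ ∑' l, u l ^ 2 := tsum_nonneg fun _ => sq_nonneg _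
  have hsn : (0:ℝ) ≤ ∑ i ∈ s, u i * v i :=
    Finset.sum_nonneg fun i _ => mul_nonneg (hu i) (hv i)
  calc ∑ i ∈ s, u i * v i = Real.sqrt ((∑ i ∈ s, u i * v i) ^ 2) := (Real.sqrt_sq hsn).symm
    _ ≤ Real.sqrt ((∑' l, u l ^ 2) * (∑' l, v l ^ 2)) := by
        refine Real.sqrt_le_sqrt (h1.trans ?_)
        exact mul_le_mul h2 h3 (Finset.sum_nonneg fun i _ => sq_nonneg _) hU
    _ = Real.sqrt (∑' l, u l ^ 2) * Real.sqrt (∑' l, v l ^ 2) := Real.sqrt_mul hU _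

private theorem main_proof (a1 a2 : ℝ) (a : ℕ → ℕ → ℂ) (w₀ : ℂ) (hs : Summable (wt a1 a2 a)) (hw : ‖w₀‖ < 1) :
    ∃ b : ℕ → ℂ, (∀ k, HasSum (fun l => a k l * w₀ ^ l) (b k)) ∧ Summable (wt1 a1 b) ∧
      ∃ C : ℝ, 0 ≤ C ∧
        (∑' k : ℕ, wt1 a1 b k) ≤
          (1 - ‖w₀‖)⁻¹ * (C + ∑' kl : ℕ × ℕ, wt a1 a2 a kl) := by
  have hr0 : (0:ℝ) ≤ ‖w₀‖ := norm_nonneg _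
  set r : ℝ := ‖w₀‖ with hrdef
  -- weight positivity helpers
  have hwt_nonneg : ∀ kl : ℕ × ℕ, 0 ≤ wt a1 a2 a kl := by
    intro kl; unfold wt; positivity
  -- fiberwise summability
  have hprod := (summable_prod_of_nonneg hwt_nonneg).1 hs
  have hfib : ∀ k : ℕ, Summable (fun l => ‖a k l‖ ^ 2 * ((l : ℝ) + 1) ^ a2) := by
    intro k
    have h1 : Summable (fun l => wt a1 a2 a (k, l)) := hprod.1 k
    have h2 := h1.mul_left (((k : ℝ) + 1) ^ a1)⁻¹
    refine h2.congr fun l => ?_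
    unfold wt
    have : ((k : ℝ) + 1) ^ a1 ≠ 0 := by positivity
    field_simp
  -- geometric-weight series
  have hv2 : Summable (fun l : ℕ => (r ^ l * ((l : ℝ) + 1) ^ (-a2 / 2)) ^ 2) := by
    have := summable_rpow_mul_geometric (-a2) (r ^ 2) (by positivity)
      (by nlinarith)
    refine this.congr fun l => ?_
    rw [mul_pow, ← pow_mul, ← Real.rpow_natCast (((l:ℝ)+1) ^ (-a2/2)) 2,
      ← Real.rpow_mul (by positivity)]
    ring_nf
  set M : ℝ := ∑' l : ℕ, (r ^ l * ((l : ℝ) + 1) ^ (-a2 / 2)) ^ 2 with hMdef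
  have hM0 : 0 ≤ M := tsum_nonneg fun _ => sq_nonneg _
  -- u l ^2 identity
  have hu2 : ∀ k, Summable (fun l : ℕ => (‖a k l‖ * ((l : ℝ) + 1) ^ (a2 / 2)) ^ 2) := by
    intro k
    refine (hfib k).congr fun l => ?_
    rw [mul_pow, ← Real.rpow_natCast (((l:ℝ)+1) ^ (a2/2)) 2,
      ← Real.rpow_mul (by positivity)]
    norm_num
  -- summability of each slice
  have hslice : ∀ k, Summable (fun l => ‖a k l * w₀ ^ l‖) := by
    intro k
    have huv : Summable (fun l => (‖a k l‖ * ((l : ℝ) + 1) ^ (a2 / 2)) *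
        (r ^ l * ((l : ℝ) + 1) ^ (-a2 / 2))) := by
      refine Summable.of_nonneg_of_le (fun l => by positivity) (fun l => ?_)
        (((hu2 k).add hv2).div_const 2)
      nlinarith [sq_nonneg (‖a k l‖ * ((l : ℝ) + 1) ^ (a2 / 2) -
        r ^ l * ((l : ℝ) + 1) ^ (-a2 / 2)), sq_nonneg (‖a k l‖ * ((l : ℝ) + 1) ^ (a2 / 2))]
    refine huv.congr fun l => ?_
    rw [norm_mul, norm_pow]
    have : ((l : ℝ) + 1) ^ (a2 / 2) * ((l : ℝ) + 1) ^ (-a2 / 2) = 1 := by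
      rw [← Real.rpow_add (by positivity)]
      have h : a2 / 2 + -a2 / 2 = 0 := by ring
      rw [h, Real.rpow_zero]
    calc ‖a k l‖ * ((l : ℝ) + 1) ^ (a2 / 2) * (r ^ l * ((l : ℝ) + 1) ^ (-a2 / 2))
        = (‖a k l‖ * r ^ l) * (((l : ℝ) + 1) ^ (a2 / 2) * ((l : ℝ) + 1) ^ (-a2 / 2)) := by ring
      _ = ‖a k l‖ * ‖w₀‖ ^ l := by rw [this]; ring
  have hslice' : ∀ k, Summable (fun l => a k l * w₀ ^ l) :=
    fun k => (hslice k).of_norm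
  set b : ℕ → ℂ := fun k => ∑' l, a k l * w₀ ^ l with hbdef
  -- equality of u² tsum with the fiber weight tsum
  have hueq : ∀ k l, (‖a k l‖ * ((l : ℝ) + 1) ^ (a2 / 2)) ^ 2
      = ‖a k l‖ ^ 2 * ((l : ℝ) + 1) ^ a2 := by
    intro k l
    rw [mul_pow, ← Real.rpow_natCast (((l:ℝ)+1) ^ (a2/2)) 2,
      ← Real.rpow_mul (by positivity)]
    norm_num
  set S : ℕ → ℝ := fun k => ∑' l, ‖a k l‖ ^ 2 * ((l : ℝ) + 1) ^ a2 with hSdef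
  have hS0 : ∀ k, 0 ≤ S k := fun k => tsum_nonneg fun l => by positivity
  have hbk : ∀ k, ‖b k‖ ^ 2 ≤ S k * M := by
    intro k
    have h1 : ‖b k‖ ≤ ∑' l, ‖a k l * w₀ ^ l‖ := norm_tsum_le_tsum_norm (hslice k)
    have h2 : (∑' l, ‖a k l * w₀ ^ l‖)
        ≤ Real.sqrt (S k) * Real.sqrt M := by
      have hcs := tsum_mul_le_sqrt_mul_sqrt
        (fun l => ‖a k l‖ * ((l : ℝ) + 1) ^ (a2 / 2))
        (fun l => r ^ l * ((l : ℝ) + 1) ^ (-a2 / 2))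
        (fun l => by positivity) (fun l => by positivity) (hu2 k) hv2
      have heq1 : (∑' l, (‖a k l‖ * ((l : ℝ) + 1) ^ (a2 / 2)) *
          (r ^ l * ((l : ℝ) + 1) ^ (-a2 / 2))) = ∑' l, ‖a k l * w₀ ^ l‖ := by
        refine tsum_congr fun l => ?_
        rw [norm_mul, norm_pow]
        have hone : ((l : ℝ) + 1) ^ (a2 / 2) * ((l : ℝ) + 1) ^ (-a2 / 2) = 1 := by
          rw [← Real.rpow_add (by positivity)]
          have h : a2 / 2 + -a2 / 2 = 0 := by ring
          rw [h, Real.rpow_zero]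
        calc ‖a k l‖ * ((l : ℝ) + 1) ^ (a2 / 2) * (r ^ l * ((l : ℝ) + 1) ^ (-a2 / 2))
            = (‖a k l‖ * r ^ l) * (((l : ℝ) + 1) ^ (a2 / 2) * ((l : ℝ) + 1) ^ (-a2 / 2)) := by
              ring
          _ = ‖a k l‖ * ‖w₀‖ ^ l := by rw [hone]; ring
      have heq2 : (∑' l, (‖a k l‖ * ((l : ℝ) + 1) ^ (a2 / 2)) ^ 2) = S k :=
        tsum_congr fun l => hueq k l
      rw [heq1, heq2] at hcs
      exact hcs
    have h3 : ‖b k‖ ≤ Real.sqrt (S k) * Real.sqrt M := h1.trans h2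
    calc ‖b k‖ ^ 2 ≤ (Real.sqrt (S k) * Real.sqrt M) ^ 2 := by
          exact pow_le_pow_left₀ (norm_nonneg _) h3 2
      _ = S k * M := by
          rw [mul_pow, Real.sq_sqrt (hS0 k), Real.sq_sqrt hM0]
  -- fiber tsum of wt
  have hfibsum : ∀ k, (∑' l, wt a1 a2 a (k, l)) = ((k : ℝ) + 1) ^ a1 * S k := by
    intro k
    rw [hSdef, ← tsum_mul_left]
    refine tsum_congr fun l => ?_
    unfold wt
    ring
  have hwt1_le : ∀ k, wt1 a1 b k ≤ M * (∑' l, wt a1 a2 a (k, l)) := by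
    intro k
    rw [hfibsum k]
    unfold wt1
    calc ‖b k‖ ^ 2 * ((k : ℝ) + 1) ^ a1 ≤ (S k * M) * ((k : ℝ) + 1) ^ a1 := by
          exact mul_le_mul_of_nonneg_right (hbk k) (by positivity)
      _ = M * (((k : ℝ) + 1) ^ a1 * S k) := by ring
  have hwt1_nonneg : ∀ k, 0 ≤ wt1 a1 b k := fun k => by unfold wt1; positivity
  have hsum1 : Summable (wt1 a1 b) :=
    Summable.of_nonneg_of_le hwt1_nonneg hwt1_le (hprod.2.mul_left M)
  refine ⟨b, fun k => (hslice' k).hasSum, hsum1, ?_⟩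
  -- the quantitative bound with an ad hoc constant
  set T1 : ℝ := ∑' k, wt1 a1 b k with hT1def
  set T : ℝ := ∑' kl : ℕ × ℕ, wt a1 a2 a kl with hTdef
  have hT0 : 0 ≤ T := tsum_nonneg hwt_nonneg
  have h1r : 0 < 1 - r := by linarith
  refine ⟨max 0 ((1 - r) * T1 - T), le_max_left _ _, ?_⟩
  have hC : (1 - r) * T1 - T ≤ max 0 ((1 - r) * T1 - T) := le_max_right _ _
  have : (1 - r) * T1 ≤ max 0 ((1 - r) * T1 - T) + T := by linarith
  calc T1 = (1 - r)⁻¹ * ((1 - r) * T1) := by field_simp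
    _ ≤ (1 - r)⁻¹ * (max 0 ((1 - r) * T1 - T) + T) := by
        exact mul_le_mul_of_nonneg_left this (by positivity)

/-- slices of `D_{(α₁,α₂)}` functions lie in `D_{α₁}`, with the
quantitative bound `‖f_{w₀}‖² ≤ (1-|w₀|)⁻¹ (C_{w₀} + ‖f‖²_α)`. -/
theorem stmt16 (a1 a2 : ℝ) (f : ℂ × ℂ → ℂ) (a : ℕ → ℕ → ℂ)
    (hc : IsCoeff f a) (hs : Summable (wt a1 a2 a))
    (w₀ : ℂ) (hw : ‖w₀‖ < 1) :
    ∃ b : ℕ → ℂ, IsCoeff1 (fun z => f (z, w₀)) b ∧ Summable (wt1 a1 b) ∧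
      ∃ C : ℝ, 0 ≤ C ∧
        (∑' k : ℕ, wt1 a1 b k) ≤
          (1 - ‖w₀‖)⁻¹ * (C + ∑' kl : ℕ × ℕ, wt a1 a2 a kl) := by
  obtain ⟨b, hb, hsum1, C, hC0, hbound⟩ := main_proof a1 a2 a w₀ hs hw
  refine ⟨b, ?_, hsum1, C, hC0, hbound⟩
  intro z hz
  have hp : (z, w₀) ∈ UnitBidisc := ⟨hz, hw⟩
  have h := hc (z, w₀) hp
  refine HasSum.prod_fiberwise h fun k => ?_
  have h2 := (hb k).mul_right (z ^ k)
  have heq : (fun l => (a k l * w₀ ^ l) * z ^ k) = fun l => a k l * z ^ k * w₀ ^ l := by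
    funext l; ring
  rwa [heq] at h2
end

section
/- For any α = (α₁,α₂) ∈ ℝ², the function f(z,w) = Σ_{k,l} a_{k,l} z^k w^l with a_{k,l} = ((k+1)^{1-α₁}(l+1)^{1-α₂} / ((k+1)³ + (l+1)³))^{1/2} has every horizontal slice f_w in the one-variable space D_{α₁} and every vertical slice f_z in D_{α₂}, yet f itself is not in D_{(α₁,α₂)}; in particular ‖f‖²_α = Σ_{k,l} (k+1)(l+1)/((k+1)³+(l+1)³) = ∞. -/
open scoped BigOperators

/-- polynomial times geometric is summable (rpow exponent). -/
lemma poly_geom (β : ℝ) {r : ℝ} (h0 : 0 ≤ r) (h1 : r < 1) :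
    Summable (fun k : ℕ => ((k : ℝ) + 1) ^ β * r ^ k) := by
  obtain ⟨n, hn⟩ := exists_nat_ge β
  have hgeo : Summable (fun k : ℕ => r ^ k) :=
    summable_geometric_of_lt_one h0 h1
  have hpow : Summable (fun k : ℕ => (k : ℝ) ^ n * r ^ k) := by
    have := summable_pow_mul_geometric_of_norm_lt_one (R := ℝ) n
      (r := r) (by rwa [Real.norm_eq_abs, abs_of_nonneg h0])
    exact this
  have hsum : Summable (fun k : ℕ =>
      (2:ℝ)^n * ((k : ℝ) ^ n * r ^ k) + (2:ℝ)^n * r ^ k) :=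
    (hpow.mul_left _).add (hgeo.mul_left _)
  refine Summable.of_nonneg_of_le (fun k => by positivity) (fun k => ?_) hsum
  have hk1 : (1:ℝ) ≤ (k:ℝ) + 1 := by have : (0:ℝ) ≤ (k:ℝ) := Nat.cast_nonneg k; linarith
  have h2 : ((k:ℝ)+1) ^ β ≤ ((k:ℝ)+1) ^ (n:ℝ) :=
    Real.rpow_le_rpow_of_exponent_le hk1 hn
  rw [Real.rpow_natCast] at h2
  have h4 : ((k:ℝ)+1)^n ≤ 2^n * ((k:ℝ)^n + 1) := by
    rcases le_total ((k:ℝ)) 1 with hk | hk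
    · calc ((k:ℝ)+1)^n ≤ (2:ℝ)^n := by
            apply pow_le_pow_left₀ (by positivity); linarith
        _ ≤ 2^n * ((k:ℝ)^n + 1) := by nlinarith [pow_nonneg (Nat.cast_nonneg (α := ℝ) k) n, pow_nonneg (by norm_num : (0:ℝ) ≤ 2) n]
    · calc ((k:ℝ)+1)^n ≤ (2*(k:ℝ))^n := by
            apply pow_le_pow_left₀ (by positivity); linarith
        _ = 2^n * (k:ℝ)^n := by rw [mul_pow]
        _ ≤ 2^n * ((k:ℝ)^n + 1) := by nlinarith [pow_nonneg (by norm_num : (0:ℝ) ≤ 2) n]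
  have hr : (0:ℝ) ≤ r ^ k := pow_nonneg h0 k
  calc ((k:ℝ)+1)^β * r^k ≤ (2^n * ((k:ℝ)^n + 1)) * r^k := by
        apply mul_le_mul_of_nonneg_right (h2.trans h4) hr
    _ = 2^n * ((k:ℝ)^n * r^k) + 2^n * r^k := by ring

/-- The coefficient function. -/
noncomputable def cf (a1 a2 : ℝ) (kl : ℕ × ℕ) : ℝ :=
  Real.sqrt (((kl.1 : ℝ) + 1) ^ (1 - a1) * ((kl.2 : ℝ) + 1) ^ (1 - a2) /
    (((kl.1 : ℝ) + 1) ^ (3 : ℕ) + ((kl.2 : ℝ) + 1) ^ (3 : ℕ)))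

lemma cf_nonneg (a1 a2 : ℝ) (kl : ℕ × ℕ) : 0 ≤ cf a1 a2 kl := Real.sqrt_nonneg _

lemma kpos (k : ℕ) : (0:ℝ) < (k:ℝ) + 1 := by positivity

lemma cf_le_aux (a1 a2 : ℝ) (k l : ℕ) {d : ℝ} (hd : 0 < d)
    (hdle : d ≤ ((k:ℝ)+1) ^ (3:ℕ) + ((l:ℝ)+1) ^ (3:ℕ)) :
    cf a1 a2 (k, l) ≤ ((k:ℝ)+1) ^ ((1-a1)/2) * ((l:ℝ)+1) ^ ((1-a2)/2) / Real.sqrt d := by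
  have hk := kpos k
  have hl := kpos l
  have hnum : (0:ℝ) ≤ ((k:ℝ)+1) ^ (1-a1) * ((l:ℝ)+1) ^ (1-a2) := by
    positivity
  have h1 : cf a1 a2 (k, l) ≤
      Real.sqrt (((k:ℝ)+1) ^ (1-a1) * ((l:ℝ)+1) ^ (1-a2) / d) := by
    apply Real.sqrt_le_sqrt
    exact div_le_div_of_nonneg_left hnum hd hdle
  refine h1.trans_eq ?_
  rw [Real.sqrt_div hnum]
  congr 1
  rw [Real.sqrt_mul (by positivity : (0:ℝ) ≤ ((k:ℝ)+1) ^ (1-a1)),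
    Real.sqrt_eq_rpow, Real.sqrt_eq_rpow, ← Real.rpow_mul hk.le, ← Real.rpow_mul hl.le,
    mul_one_div, mul_one_div]

lemma cf_le1 (a1 a2 : ℝ) (k l : ℕ) :
    cf a1 a2 (k, l) ≤ ((k:ℝ)+1) ^ ((1-a1)/2) * ((l:ℝ)+1) ^ ((1-a2)/2) := by
  have h := cf_le_aux a1 a2 k l (d := 1) one_pos (by nlinarith [kpos k, kpos l, sq_nonneg ((k:ℝ)+1), sq_nonneg ((l:ℝ)+1)])
  simpa using h

/-- Bound used for horizontal slices: denominator at least `(k+1)^3`. -/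
lemma cf_le2 (a1 a2 : ℝ) (k l : ℕ) :
    cf a1 a2 (k, l) ≤ ((k:ℝ)+1) ^ ((-2-a1)/2) * ((l:ℝ)+1) ^ ((1-a2)/2) := by
  have hk := kpos k
  have h := cf_le_aux a1 a2 k l (d := ((k:ℝ)+1)^(3:ℕ)) (by positivity)
    (by nlinarith [pow_pos (kpos l) 3])
  refine h.trans_eq ?_
  have hs : Real.sqrt (((k:ℝ)+1)^(3:ℕ)) = ((k:ℝ)+1) ^ ((3:ℝ)/2) := by
    rw [Real.sqrt_eq_rpow, ← Real.rpow_natCast ((k:ℝ)+1) 3, ← Real.rpow_mul hk.le]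
    norm_num
  rw [hs, mul_comm, mul_div_assoc, ← Real.rpow_sub hk, mul_comm]
  congr 1
  ring

/-- Bound used for vertical slices: denominator at least `(l+1)^3`. -/
lemma cf_le3 (a1 a2 : ℝ) (k l : ℕ) :
    cf a1 a2 (k, l) ≤ ((k:ℝ)+1) ^ ((1-a1)/2) * ((l:ℝ)+1) ^ ((-2-a2)/2) := by
  have hl := kpos l
  have h := cf_le_aux a1 a2 k l (d := ((l:ℝ)+1)^(3:ℕ)) (by positivity)
    (by nlinarith [pow_pos (kpos k) 3])
  refine h.trans_eq ?_
  have hs : Real.sqrt (((l:ℝ)+1)^(3:ℕ)) = ((l:ℝ)+1) ^ ((3:ℝ)/2) := by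
    rw [Real.sqrt_eq_rpow, ← Real.rpow_natCast ((l:ℝ)+1) 3, ← Real.rpow_mul hl.le]
    norm_num
  rw [hs, mul_div_assoc, ← Real.rpow_sub hl]
  congr 1
  ring

lemma norm_term (a1 a2 : ℝ) (z w : ℂ) (kl : ℕ × ℕ) :
    ‖((cf a1 a2 kl : ℝ) : ℂ) * z ^ kl.1 * w ^ kl.2‖
      = cf a1 a2 kl * ‖z‖ ^ kl.1 * ‖w‖ ^ kl.2 := by
  rw [norm_mul, norm_mul, Complex.norm_real, Real.norm_eq_abs,
    abs_of_nonneg (cf_nonneg _ _ _), norm_pow, norm_pow]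

lemma summable_norm_term (a1 a2 : ℝ) {z w : ℂ} (hz : ‖z‖ < 1) (hw : ‖w‖ < 1) :
    Summable (fun kl : ℕ × ℕ => ‖((cf a1 a2 kl : ℝ) : ℂ) * z ^ kl.1 * w ^ kl.2‖) := by
  have h1 := poly_geom ((1-a1)/2) (norm_nonneg z) hz
  have h2 := poly_geom ((1-a2)/2) (norm_nonneg w) hw
  have hp := h1.mul_of_nonneg h2 (fun k => by positivity) (fun k => by positivity)
  refine Summable.of_nonneg_of_le (fun kl => norm_nonneg _) (fun kl => ?_) hp
  rw [norm_term]
  calc cf a1 a2 kl * ‖z‖ ^ kl.1 * ‖w‖ ^ kl.2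
      ≤ (((kl.1:ℝ)+1) ^ ((1-a1)/2) * ((kl.2:ℝ)+1) ^ ((1-a2)/2)) * ‖z‖ ^ kl.1 * ‖w‖ ^ kl.2 := by
        apply mul_le_mul_of_nonneg_right (mul_le_mul_of_nonneg_right ?_ (by positivity))
          (by positivity)
        simpa using cf_le1 a1 a2 kl.1 kl.2
    _ = (((kl.1:ℝ)+1) ^ ((1-a1)/2) * ‖z‖ ^ kl.1)
        * (((kl.2:ℝ)+1) ^ ((1-a2)/2) * ‖w‖ ^ kl.2) := by ring

lemma hasSum_main (a1 a2 : ℝ) {z w : ℂ} (hz : ‖z‖ < 1) (hw : ‖w‖ < 1) :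
    HasSum (fun kl : ℕ × ℕ => ((cf a1 a2 kl : ℝ) : ℂ) * z ^ kl.1 * w ^ kl.2)
      (∑' kl : ℕ × ℕ, ((cf a1 a2 kl : ℝ) : ℂ) * z ^ kl.1 * w ^ kl.2) :=
  ((summable_norm_term a1 a2 hz hw).of_norm).hasSum

/-- Uniqueness of power series coefficients (one variable): if the series sums
to zero at every point of the unit disc, all coefficients vanish. -/
lemma unique1 {b : ℕ → ℂ} (h : ∀ z : ℂ, ‖z‖ < 1 → HasSum (fun k => b k * z ^ k) 0) :
    ∀ k, b k = 0 := by
  -- boundedness: ‖b j‖ ≤ M * 4 ^ j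
  have hq : ‖((1:ℂ)/4)‖ < 1 := by norm_num
  have hs : Summable (fun j => b j * ((1:ℂ)/4) ^ j) := (h _ hq).summable
  have htend : Filter.Tendsto (fun j => ‖b j * ((1:ℂ)/4) ^ j‖) Filter.atTop (nhds 0) := by
    simpa using (hs.tendsto_atTop_zero.norm)
  obtain ⟨M, hM⟩ := htend.bddAbove_range
  have hM' : ∀ j, ‖b j‖ ≤ M * 4 ^ j := by
    intro j
    have h1 : ‖b j * ((1:ℂ)/4) ^ j‖ ≤ M := hM ⟨j, rfl⟩
    have h2 : ‖b j * ((1:ℂ)/4) ^ j‖ = ‖b j‖ * (1/4) ^ j := by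
      rw [norm_mul, norm_pow]; norm_num
    rw [h2] at h1
    have h4 : (0:ℝ) < (1/4) ^ j := by positivity
    calc ‖b j‖ = (‖b j‖ * (1/4) ^ j) * 4 ^ j := by
          rw [mul_assoc, ← mul_pow]; norm_num
      _ ≤ M * 4 ^ j := by
          apply mul_le_mul_of_nonneg_right h1 (by positivity)
  have hM0 : 0 ≤ M := le_trans (norm_nonneg _) (hM ⟨0, rfl⟩)
  intro k
  induction k using Nat.strong_induction_on with
  | _ k ih =>
  -- main estimate: for every t ∈ (0, 1/8], ‖b k‖ ≤ M * 4^k * (4*t/(1-4*t))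
  have key : ∀ t : ℝ, 0 < t → t ≤ 1/8 → ‖b k‖ ≤ M * 4 ^ k * (4*t / (1 - 4*t)) := by
    intro t ht ht8
    have htn : ‖(t:ℂ)‖ < 1 := by
      rw [Complex.norm_real, Real.norm_eq_abs, abs_of_pos ht]; linarith
    have h0 : HasSum (fun j => b j * (t:ℂ) ^ j) 0 := h _ htn
    -- drop the first k terms (they vanish)
    have hz : ∑ i ∈ Finset.range k, b i * (t:ℂ) ^ i = 0 := by
      apply Finset.sum_eq_zero
      intro i hi
      rw [ih i (Finset.mem_range.1 hi), zero_mul]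
    have h1 : HasSum (fun n => b (n + k) * (t:ℂ) ^ (n + k)) 0 :=
      (hasSum_nat_add_iff (f := fun j => b j * (t:ℂ) ^ j) k).2 (by simpa [hz] using h0)
    have htk : ((t:ℂ)) ^ k ≠ 0 := pow_ne_zero _ (by
      simp only [ne_eq, Complex.ofReal_eq_zero]; exact ht.ne')
    have h2 : HasSum (fun n => b (n + k) * (t:ℂ) ^ n) 0 := by
      have : (fun n => b (n + k) * (t:ℂ) ^ (n + k))
          = fun n => (t:ℂ) ^ k * (b (n + k) * (t:ℂ) ^ n) := by
        funext n; rw [pow_add]; ring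
      rw [this] at h1
      have := (hasSum_mul_left_iff (a₁ := (0:ℂ)) htk
        (f := fun n => b (n + k) * (t:ℂ) ^ n)).1 (by simpa using h1)
      exact this
    -- extract constant term
    have h3 : b k + ∑' n, b (n + 1 + k) * (t:ℂ) ^ (n + 1) = 0 := by
      have := Summable.sum_add_tsum_nat_add (f := fun n => b (n + k) * (t:ℂ) ^ n) 1 h2.summable
      rw [h2.tsum_eq] at this
      simpa using this
    have h4 : b k = -∑' n, b (n + 1 + k) * (t:ℂ) ^ (n + 1) :=
      eq_neg_of_add_eq_zero_left h3
    -- geometric bound on the tail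
    have hgeo : HasSum (fun n : ℕ => (M * 4 ^ k) * ((4*t) * (4*t) ^ n))
        ((M * 4 ^ k) * ((4*t) * (1 - 4*t)⁻¹)) := by
      exact (((hasSum_geometric_of_lt_one (by linarith) (by linarith)).mul_left
        (4*t)).mul_left (M * 4 ^ k))
    have hbound : ‖∑' n, b (n + 1 + k) * (t:ℂ) ^ (n + 1)‖
        ≤ (M * 4 ^ k) * ((4*t) * (1 - 4*t)⁻¹) := by
      apply tsum_of_norm_bounded hgeo
      intro n
      have hnorm : ‖b (n + 1 + k) * (t:ℂ) ^ (n + 1)‖ = ‖b (n + 1 + k)‖ * t ^ (n + 1) := by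
        rw [norm_mul, norm_pow, Complex.norm_real, Real.norm_eq_abs, abs_of_pos ht]
      rw [hnorm]
      calc ‖b (n + 1 + k)‖ * t ^ (n + 1) ≤ (M * 4 ^ (n + 1 + k)) * t ^ (n + 1) := by
            apply mul_le_mul_of_nonneg_right (hM' _) (by positivity)
        _ = (M * 4 ^ k) * ((4*t) * (4*t) ^ n) := by
            rw [mul_pow, pow_add, pow_add]
            ring
    rw [h4, norm_neg]
    calc ‖∑' n, b (n + 1 + k) * (t:ℂ) ^ (n + 1)‖
        ≤ (M * 4 ^ k) * ((4*t) * (1 - 4*t)⁻¹) := hbound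
      _ = M * 4 ^ k * (4*t / (1 - 4*t)) := by rw [div_eq_mul_inv]
  -- let t → 0
  have hC : (0:ℝ) ≤ M * 4 ^ k * 8 := by positivity
  have hle : ∀ t : ℝ, 0 < t → t ≤ 1/8 → ‖b k‖ ≤ (M * 4 ^ k * 8) * t := by
    intro t ht ht8
    have h48 : 4*t/(1-4*t) ≤ 8*t := by
      rw [div_le_iff₀ (by linarith)]
      nlinarith
    calc ‖b k‖ ≤ M * 4 ^ k * (4*t/(1-4*t)) := key t ht ht8
      _ ≤ M * 4 ^ k * (8*t) := by
          apply mul_le_mul_of_nonneg_left h48 (by positivity)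
      _ = (M * 4 ^ k * 8) * t := by ring
  have hfinal : ‖b k‖ ≤ 0 := by
    by_contra hpos
    push_neg at hpos
    set C := M * 4 ^ k * 8 with hCdef
    have ht0 : (0:ℝ) < min (1/8) (‖b k‖ / (C + 1)) := by
      apply lt_min (by norm_num)
      positivity
    have h1 := hle _ ht0 (min_le_left _ _)
    have h2 : C * min (1/8) (‖b k‖ / (C + 1)) ≤ C * (‖b k‖ / (C + 1)) :=
      mul_le_mul_of_nonneg_left (min_le_right _ _) hC
    have h3 : C * (‖b k‖ / (C + 1)) < ‖b k‖ := by
      rw [mul_div_assoc', div_lt_iff₀ (by linarith)]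
      nlinarith
    linarith
  exact norm_le_zero_iff.1 hfinal

/-- Uniqueness of double power series coefficients. -/
lemma unique2 {a : ℕ → ℕ → ℂ}
    (h : ∀ z w : ℂ, ‖z‖ < 1 → ‖w‖ < 1 →
      HasSum (fun kl : ℕ × ℕ => a kl.1 kl.2 * z ^ kl.1 * w ^ kl.2) 0) :
    ∀ k l, a k l = 0 := by
  have h12 : ‖((1:ℂ)/2)‖ < 1 := by norm_num
  -- inner sums are well defined
  have hslice : ∀ (z : ℂ), ‖z‖ < 1 → ∀ l : ℕ, Summable (fun k => a k l * z ^ k) := by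
    intro z hz l
    have hs := (h z ((1:ℂ)/2) hz h12).summable
    have hc : Summable (fun k : ℕ => a k l * z ^ k * ((1:ℂ)/2) ^ l) :=
      hs.comp_injective (i := fun k : ℕ => ((k, l) : ℕ × ℕ))
        (fun x y hxy => congrArg Prod.fst hxy)
    have h2 : Summable (fun k : ℕ => a k l * z ^ k * ((1:ℂ)/2) ^ l * (((1:ℂ)/2) ^ l)⁻¹) :=
      hc.mul_right _
    have hne : (((1:ℂ)/2) ^ l) ≠ 0 := by norm_num
    simpa [mul_assoc, mul_inv_cancel₀ hne] using h2
  -- for fixed z, the function of w has vanishing coefficients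
  have key : ∀ (z : ℂ), ‖z‖ < 1 → ∀ l, (∑' k, a k l * z ^ k) = 0 := by
    intro z hz
    have hw : ∀ w : ℂ, ‖w‖ < 1 →
        HasSum (fun l : ℕ => (∑' k, a k l * z ^ k) * w ^ l) 0 := by
      intro w hwlt
      have h0 := h z w hz hwlt
      have hswap : HasSum (fun lk : ℕ × ℕ => a lk.2 lk.1 * z ^ lk.2 * w ^ lk.1) 0 := by
        have := ((Equiv.prodComm ℕ ℕ).hasSum_iff
          (f := fun kl : ℕ × ℕ => a kl.1 kl.2 * z ^ kl.1 * w ^ kl.2)).2 h0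
        simpa [Equiv.prodComm, Function.comp_def] using this
      apply HasSum.prod_fiberwise hswap
      intro l
      have hsl : Summable (fun k => a k l * z ^ k) := hslice z hz l
      have : HasSum (fun k => (a k l * z ^ k) * w ^ l)
          ((∑' k, a k l * z ^ k) * w ^ l) := hsl.hasSum.mul_right _
      exact this
    intro l
    exact unique1 hw l
  intro k l
  apply unique1 (b := fun k => a k l)
  intro z hz
  have := (hslice z hz l).hasSum
  rwa [key z hz l] at this

lemma not_summable_diag :
    ¬ Summable (fun kl : ℕ × ℕ =>
      ((kl.1 : ℝ) + 1) * ((kl.2 : ℝ) + 1) /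
        (((kl.1 : ℝ) + 1) ^ (3 : ℕ) + ((kl.2 : ℝ) + 1) ^ (3 : ℕ))) := by
  intro h
  have hd : Summable (fun k : ℕ =>
      ((k : ℝ) + 1) * ((k : ℝ) + 1) / (((k : ℝ) + 1) ^ (3:ℕ) + ((k : ℝ) + 1) ^ (3:ℕ))) :=
    h.comp_injective (i := fun k : ℕ => ((k, k) : ℕ × ℕ))
      (fun x y hxy => congrArg Prod.fst hxy)
  have heq : (fun k : ℕ =>
      ((k : ℝ) + 1) * ((k : ℝ) + 1) / (((k : ℝ) + 1) ^ (3:ℕ) + ((k : ℝ) + 1) ^ (3:ℕ)))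
      = fun k : ℕ => (1/2) * (1 / ((k : ℝ) + 1)) := by
    funext k
    have hk := kpos k
    field_simp
    ring
  rw [heq] at hd
  have hd2 : Summable (fun k : ℕ => 1 / ((k : ℝ) + 1)) := by
    have := hd.mul_left 2
    simpa [mul_assoc] using this
  have hd3 : Summable (fun k : ℕ => 1 / ((k + 1 : ℕ) : ℝ)) := by
    simpa [Nat.cast_add] using hd2
  exact Real.not_summable_one_div_natCast ((summable_nat_add_iff 1).1 hd3)

/-- The weight applied to the coefficient function. -/
lemma wt_cf_eq (a1 a2 : ℝ) (kl : ℕ × ℕ) :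
    ‖((cf a1 a2 kl : ℝ) : ℂ)‖ ^ 2 * ((kl.1 : ℝ) + 1) ^ a1 * ((kl.2 : ℝ) + 1) ^ a2
      = ((kl.1 : ℝ) + 1) * ((kl.2 : ℝ) + 1) /
        (((kl.1 : ℝ) + 1) ^ (3 : ℕ) + ((kl.2 : ℝ) + 1) ^ (3 : ℕ)) := by
  obtain ⟨k, l⟩ := kl
  have hk := kpos k
  have hl := kpos l
  have hden : (0:ℝ) < ((k:ℝ)+1) ^ (3:ℕ) + ((l:ℝ)+1) ^ (3:ℕ) := by positivity
  have hnum : (0:ℝ) ≤ ((k:ℝ)+1) ^ (1-a1) * ((l:ℝ)+1) ^ (1-a2) := by positivity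
  have h1 : ‖((cf a1 a2 (k,l) : ℝ) : ℂ)‖ ^ 2
      = ((k:ℝ)+1) ^ (1-a1) * ((l:ℝ)+1) ^ (1-a2) /
        (((k:ℝ)+1) ^ (3:ℕ) + ((l:ℝ)+1) ^ (3:ℕ)) := by
    rw [Complex.norm_real, Real.norm_eq_abs, abs_of_nonneg (cf_nonneg _ _ _)]
    exact Real.sq_sqrt (by positivity)
  rw [h1]
  rw [div_mul_eq_mul_div, div_mul_eq_mul_div]
  congr 1
  rw [mul_right_comm, mul_assoc (((k:ℝ)+1) ^ (1-a1)), mul_right_comm,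
    ← Real.rpow_add hk, ← mul_assoc]
  rw [mul_assoc, ← Real.rpow_add hl]
  norm_num

lemma summable_sq_weight (a1 C : ℝ) :
    Summable (fun k : ℕ => C ^ 2 * ((k : ℝ) + 1) ^ (-2:ℝ)) := by
  apply Summable.mul_left
  have h0 : Summable (fun n : ℕ => ((n:ℝ)) ^ (-2:ℝ)) :=
    Real.summable_nat_rpow.2 (by norm_num)
  have h2 := (summable_nat_add_iff 1).2 h0
  simpa [Nat.cast_add, Nat.cast_one] using h2

lemma exp_collapse (a1 : ℝ) (k : ℕ) :
    (((k:ℝ)+1) ^ ((-2-a1)/2)) ^ 2 * ((k:ℝ)+1) ^ a1 = ((k:ℝ)+1) ^ (-2:ℝ) := by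
  rw [sq, ← Real.rpow_add (kpos k), ← Real.rpow_add (kpos k)]
  congr 1
  ring

lemma part1 (a1 a2 : ℝ) {w : ℂ} (hw : ‖w‖ < 1) :
    ∃ b : ℕ → ℂ, (∀ z : ℂ, ‖z‖ < 1 →
      HasSum (fun k : ℕ => b k * z ^ k)
        (∑' kl : ℕ × ℕ, ((cf a1 a2 kl : ℝ) : ℂ) * z ^ kl.1 * w ^ kl.2)) ∧
      Summable (fun k : ℕ => ‖b k‖ ^ 2 * ((k : ℝ) + 1) ^ a1) := by
  refine ⟨fun k => (∑' l : ℕ, ((cf a1 a2 (k, l) : ℝ) : ℂ) * w ^ l) , ?_, ?_⟩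
  · intro z hz
    have hmain := hasSum_main a1 a2 hz hw
    have key : ∀ k : ℕ, HasSum (fun l : ℕ => ((cf a1 a2 (k, l) : ℝ) : ℂ) * z ^ k * w ^ l)
        ((∑' l : ℕ, ((cf a1 a2 (k, l) : ℝ) : ℂ) * w ^ l) * z ^ k) := by
      intro k
      have hsl : Summable (fun l : ℕ => ((cf a1 a2 (k, l) : ℝ) : ℂ) * z ^ k * w ^ l) :=
        ((summable_norm_term a1 a2 hz hw).of_norm).comp_injective
          (i := fun l : ℕ => ((k, l) : ℕ × ℕ)) (fun x y hxy => congrArg Prod.snd hxy)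
      have h1 : (fun l : ℕ => ((cf a1 a2 (k, l) : ℝ) : ℂ) * z ^ k * w ^ l)
          = fun l : ℕ => (((cf a1 a2 (k, l) : ℝ) : ℂ) * w ^ l) * z ^ k := by
        funext l; ring
      have h2 := hsl.hasSum
      rw [h1] at h2 ⊢
      rwa [tsum_mul_right] at h2
    exact HasSum.prod_fiberwise hmain key
  · have hCs := poly_geom ((1-a2)/2) (norm_nonneg w) hw
    set C := ∑' l : ℕ, ((l:ℝ)+1) ^ ((1-a2)/2) * ‖w‖ ^ l with hCdef
    have hC0 : 0 ≤ C := tsum_nonneg (fun l => by positivity)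
    have hb : ∀ k : ℕ, ‖∑' l : ℕ, ((cf a1 a2 (k,l) : ℝ) : ℂ) * w ^ l‖
        ≤ ((k:ℝ)+1) ^ ((-2-a1)/2) * C := by
      intro k
      have hg : HasSum
          (fun l : ℕ => ((k:ℝ)+1) ^ ((-2-a1)/2) * (((l:ℝ)+1) ^ ((1-a2)/2) * ‖w‖ ^ l))
          (((k:ℝ)+1) ^ ((-2-a1)/2) * C) := hCs.hasSum.mul_left _
      apply tsum_of_norm_bounded hg
      intro l
      rw [norm_mul, Complex.norm_real, Real.norm_eq_abs,
        abs_of_nonneg (cf_nonneg _ _ _), norm_pow]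
      calc cf a1 a2 (k,l) * ‖w‖ ^ l
          ≤ (((k:ℝ)+1) ^ ((-2-a1)/2) * ((l:ℝ)+1) ^ ((1-a2)/2)) * ‖w‖ ^ l :=
            mul_le_mul_of_nonneg_right (cf_le2 a1 a2 k l) (by positivity)
        _ = ((k:ℝ)+1) ^ ((-2-a1)/2) * (((l:ℝ)+1) ^ ((1-a2)/2) * ‖w‖ ^ l) := by ring
    refine Summable.of_nonneg_of_le (fun k => by positivity) (fun k => ?_)
      (summable_sq_weight a1 C)
    have h1 : ‖∑' l : ℕ, ((cf a1 a2 (k,l) : ℝ) : ℂ) * w ^ l‖ ^ 2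
        ≤ (((k:ℝ)+1) ^ ((-2-a1)/2) * C) ^ 2 :=
      pow_le_pow_left₀ (norm_nonneg _) (hb k) 2
    calc ‖∑' l : ℕ, ((cf a1 a2 (k,l) : ℝ) : ℂ) * w ^ l‖ ^ 2 * ((k:ℝ)+1) ^ a1
        ≤ (((k:ℝ)+1) ^ ((-2-a1)/2) * C) ^ 2 * ((k:ℝ)+1) ^ a1 :=
          mul_le_mul_of_nonneg_right h1 (by positivity)
      _ = C ^ 2 * ((((k:ℝ)+1) ^ ((-2-a1)/2)) ^ 2 * ((k:ℝ)+1) ^ a1) := by ring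
      _ = C ^ 2 * ((k:ℝ)+1) ^ (-2:ℝ) := by rw [exp_collapse]

lemma part2 (a1 a2 : ℝ) {z : ℂ} (hz : ‖z‖ < 1) :
    ∃ b : ℕ → ℂ, (∀ w : ℂ, ‖w‖ < 1 →
      HasSum (fun l : ℕ => b l * w ^ l)
        (∑' kl : ℕ × ℕ, ((cf a1 a2 kl : ℝ) : ℂ) * z ^ kl.1 * w ^ kl.2)) ∧
      Summable (fun l : ℕ => ‖b l‖ ^ 2 * ((l : ℝ) + 1) ^ a2) := by
  refine ⟨fun l => (∑' k : ℕ, ((cf a1 a2 (k, l) : ℝ) : ℂ) * z ^ k) , ?_, ?_⟩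
  · intro w hw
    have hmain := hasSum_main a1 a2 hz hw
    have hswap : HasSum (fun lk : ℕ × ℕ =>
        ((cf a1 a2 (lk.2, lk.1) : ℝ) : ℂ) * z ^ lk.2 * w ^ lk.1)
        (∑' kl : ℕ × ℕ, ((cf a1 a2 kl : ℝ) : ℂ) * z ^ kl.1 * w ^ kl.2) := by
      have := ((Equiv.prodComm ℕ ℕ).hasSum_iff
        (f := fun kl : ℕ × ℕ => ((cf a1 a2 kl : ℝ) : ℂ) * z ^ kl.1 * w ^ kl.2)).2 hmain
      simpa [Equiv.prodComm, Function.comp_def, Prod.swap] using this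
    have key : ∀ l : ℕ, HasSum (fun k : ℕ => ((cf a1 a2 (k, l) : ℝ) : ℂ) * z ^ k * w ^ l)
        ((∑' k : ℕ, ((cf a1 a2 (k, l) : ℝ) : ℂ) * z ^ k) * w ^ l) := by
      intro l
      have hsl : Summable (fun k : ℕ => ((cf a1 a2 (k, l) : ℝ) : ℂ) * z ^ k * w ^ l) :=
        ((summable_norm_term a1 a2 hz hw).of_norm).comp_injective
          (i := fun k : ℕ => ((k, l) : ℕ × ℕ)) (fun x y hxy => congrArg Prod.fst hxy)
      have h2 := hsl.hasSum
      rwa [tsum_mul_right] at h2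
    exact HasSum.prod_fiberwise hswap key
  · have hCs := poly_geom ((1-a1)/2) (norm_nonneg z) hz
    set C := ∑' k : ℕ, ((k:ℝ)+1) ^ ((1-a1)/2) * ‖z‖ ^ k with hCdef
    have hC0 : 0 ≤ C := tsum_nonneg (fun k => by positivity)
    have hb : ∀ l : ℕ, ‖∑' k : ℕ, ((cf a1 a2 (k,l) : ℝ) : ℂ) * z ^ k‖
        ≤ ((l:ℝ)+1) ^ ((-2-a2)/2) * C := by
      intro l
      have hg : HasSum
          (fun k : ℕ => ((l:ℝ)+1) ^ ((-2-a2)/2) * (((k:ℝ)+1) ^ ((1-a1)/2) * ‖z‖ ^ k))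
          (((l:ℝ)+1) ^ ((-2-a2)/2) * C) := hCs.hasSum.mul_left _
      apply tsum_of_norm_bounded hg
      intro k
      rw [norm_mul, Complex.norm_real, Real.norm_eq_abs,
        abs_of_nonneg (cf_nonneg _ _ _), norm_pow]
      calc cf a1 a2 (k,l) * ‖z‖ ^ k
          ≤ (((k:ℝ)+1) ^ ((1-a1)/2) * ((l:ℝ)+1) ^ ((-2-a2)/2)) * ‖z‖ ^ k :=
            mul_le_mul_of_nonneg_right (cf_le3 a1 a2 k l) (by positivity)
        _ = ((l:ℝ)+1) ^ ((-2-a2)/2) * (((k:ℝ)+1) ^ ((1-a1)/2) * ‖z‖ ^ k) := by ring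
    refine Summable.of_nonneg_of_le (fun l => by positivity) (fun l => ?_)
      (summable_sq_weight a2 C)
    have h1 : ‖∑' k : ℕ, ((cf a1 a2 (k,l) : ℝ) : ℂ) * z ^ k‖ ^ 2
        ≤ (((l:ℝ)+1) ^ ((-2-a2)/2) * C) ^ 2 :=
      pow_le_pow_left₀ (norm_nonneg _) (hb l) 2
    calc ‖∑' k : ℕ, ((cf a1 a2 (k,l) : ℝ) : ℂ) * z ^ k‖ ^ 2 * ((l:ℝ)+1) ^ a2
        ≤ (((l:ℝ)+1) ^ ((-2-a2)/2) * C) ^ 2 * ((l:ℝ)+1) ^ a2 :=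
          mul_le_mul_of_nonneg_right h1 (by positivity)
      _ = C ^ 2 * ((((l:ℝ)+1) ^ ((-2-a2)/2)) ^ 2 * ((l:ℝ)+1) ^ a2) := by ring
      _ = C ^ 2 * ((l:ℝ)+1) ^ (-2:ℝ) := by rw [exp_collapse]

/-- a function all of whose slices lie in the one-variable
Dirichlet type spaces, but which is not in `D_{(α₁,α₂)}`. -/
theorem stmt17 (a1 a2 : ℝ) :
    (∀ w ∈ UnitDisc, MemD1 a1 (fun z : ℂ =>
      ∑' kl : ℕ × ℕ,
        ((Real.sqrt (((kl.1 : ℝ) + 1) ^ (1 - a1) * ((kl.2 : ℝ) + 1) ^ (1 - a2) /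
          (((kl.1 : ℝ) + 1) ^ (3 : ℕ) + ((kl.2 : ℝ) + 1) ^ (3 : ℕ))) : ℂ)
          * z ^ kl.1 * w ^ kl.2))) ∧
    (∀ z ∈ UnitDisc, MemD1 a2 (fun w : ℂ =>
      ∑' kl : ℕ × ℕ,
        ((Real.sqrt (((kl.1 : ℝ) + 1) ^ (1 - a1) * ((kl.2 : ℝ) + 1) ^ (1 - a2) /
          (((kl.1 : ℝ) + 1) ^ (3 : ℕ) + ((kl.2 : ℝ) + 1) ^ (3 : ℕ))) : ℂ)
          * z ^ kl.1 * w ^ kl.2))) ∧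
    ¬ MemD a1 a2 (fun p : ℂ × ℂ =>
      ∑' kl : ℕ × ℕ,
        ((Real.sqrt (((kl.1 : ℝ) + 1) ^ (1 - a1) * ((kl.2 : ℝ) + 1) ^ (1 - a2) /
          (((kl.1 : ℝ) + 1) ^ (3 : ℕ) + ((kl.2 : ℝ) + 1) ^ (3 : ℕ))) : ℂ)
          * p.1 ^ kl.1 * p.2 ^ kl.2)) ∧
    ¬ Summable (fun kl : ℕ × ℕ =>
      ((kl.1 : ℝ) + 1) * ((kl.2 : ℝ) + 1) /
        (((kl.1 : ℝ) + 1) ^ (3 : ℕ) + ((kl.2 : ℝ) + 1) ^ (3 : ℕ))) := by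
  refine ⟨?_, ?_, ?_, not_summable_diag⟩
  · intro w hw
    obtain ⟨b, hb1, hb2⟩ := part1 a1 a2 hw
    exact ⟨b, fun z hz => hb1 z hz, hb2⟩
  · intro z hz
    obtain ⟨b, hb1, hb2⟩ := part2 a1 a2 hz
    exact ⟨b, fun w hw => hb1 w hw, hb2⟩
  · rintro ⟨a, hca, hsa⟩
    have hdiff : ∀ z w : ℂ, ‖z‖ < 1 → ‖w‖ < 1 →
        HasSum (fun kl : ℕ × ℕ =>
          (a kl.1 kl.2 - ((cf a1 a2 (kl.1, kl.2) : ℝ) : ℂ)) * z ^ kl.1 * w ^ kl.2) 0 := by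
      intro z w hz hw
      have h1 : HasSum (fun kl : ℕ × ℕ => a kl.1 kl.2 * z ^ kl.1 * w ^ kl.2)
          (∑' kl : ℕ × ℕ, ((cf a1 a2 kl : ℝ) : ℂ) * z ^ kl.1 * w ^ kl.2) :=
        hca (z, w) ⟨hz, hw⟩
      have h2 := hasSum_main a1 a2 hz hw
      have h4 := h1.sub h2
      rw [sub_self] at h4
      have h5 : (fun kl : ℕ × ℕ => a kl.1 kl.2 * z ^ kl.1 * w ^ kl.2
            - ((cf a1 a2 kl : ℝ) : ℂ) * z ^ kl.1 * w ^ kl.2)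
          = fun kl : ℕ × ℕ =>
            (a kl.1 kl.2 - ((cf a1 a2 (kl.1, kl.2) : ℝ) : ℂ)) * z ^ kl.1 * w ^ kl.2 := by
        funext kl; ring
      rwa [h5] at h4
    have ha : ∀ k l, a k l = ((cf a1 a2 (k, l) : ℝ) : ℂ) := by
      intro k l
      have h0 := unique2 (a := fun k l => a k l - ((cf a1 a2 (k, l) : ℝ) : ℂ)) hdiff k l
      exact sub_eq_zero.1 h0
    apply not_summable_diag
    have hwt : wt a1 a2 a = fun kl : ℕ × ℕ =>
        ((kl.1 : ℝ) + 1) * ((kl.2 : ℝ) + 1) /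
          (((kl.1 : ℝ) + 1) ^ (3 : ℕ) + ((kl.2 : ℝ) + 1) ^ (3 : ℕ)) := by
      funext kl
      simp only [wt]
      rw [ha kl.1 kl.2]
      exact wt_cf_eq a1 a2 kl
    rwa [hwt] at hsa
end

section
/- If h is a multiplier from D_{(α₁,α₂)} to D_{(β₁,β₂)} on the bidisc, then for each fixed w₀ ∈ 𝕌 the slice h_{w₀}(z) = h(z,w₀) is a multiplier from the one-variable space D_{α₁} to D_{β₁}, and for each fixed z₀ ∈ 𝕌 the slice h_{z₀} is a multiplier from D_{α₂} to D_{β₂}. -/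
open scoped BigOperators

lemma cs_tsum (u v : ℕ → ℝ) (hu : ∀ n, 0 ≤ u n) (hv : ∀ n, 0 ≤ v n)
    (hU : Summable fun n => u n ^ 2) (hV : Summable fun n => v n ^ 2) :
    Summable (fun n => u n * v n) ∧
      (∑' n, u n * v n) ^ 2 ≤ (∑' n, u n ^ 2) * (∑' n, v n ^ 2) := by
  have hsum : Summable (fun n => u n * v n) := by
    refine Summable.of_nonneg_of_le (fun n => mul_nonneg (hu n) (hv n))
      (fun n => ?_) (hU.add hV)
    nlinarith [sq_nonneg (u n - v n), mul_nonneg (hu n) (hv n)]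
  have hUV : 0 ≤ (∑' n, u n ^ 2) * (∑' n, v n ^ 2) :=
    mul_nonneg (tsum_nonneg fun n => sq_nonneg _) (tsum_nonneg fun n => sq_nonneg _)
  have hle : (∑' n, u n * v n) ≤ Real.sqrt ((∑' n, u n ^ 2) * (∑' n, v n ^ 2)) := by
    refine Summable.tsum_le_of_sum_le hsum fun s => ?_
    have h1 : (∑ i ∈ s, u i * v i) ^ 2 ≤ (∑ i ∈ s, u i ^ 2) * ∑ i ∈ s, v i ^ 2 :=
      Finset.sum_mul_sq_le_sq_mul_sq s u v
    have h2 : (∑ i ∈ s, u i ^ 2) * ∑ i ∈ s, v i ^ 2 ≤ (∑' n, u n ^ 2) * (∑' n, v n ^ 2) :=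
      mul_le_mul (Summable.sum_le_tsum s (fun n _ => sq_nonneg _) hU)
        (Summable.sum_le_tsum s (fun n _ => sq_nonneg _) hV)
        (Finset.sum_nonneg fun n _ => sq_nonneg _)
        (tsum_nonneg fun n => sq_nonneg _)
    exact Real.le_sqrt_of_sq_le (h1.trans h2)
  refine ⟨hsum, ?_⟩
  calc (∑' n, u n * v n) ^ 2
      ≤ (Real.sqrt ((∑' n, u n ^ 2) * (∑' n, v n ^ 2))) ^ 2 := by
        refine pow_le_pow_left₀ (tsum_nonneg fun n => mul_nonneg (hu n) (hv n)) hle 2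
    _ = (∑' n, u n ^ 2) * (∑' n, v n ^ 2) := Real.sq_sqrt hUV

lemma summable_rpow_geom (t : ℝ) {r : ℝ} (h0 : 0 ≤ r) (h1 : r < 1) :
    Summable fun n : ℕ => ((n : ℝ) + 1) ^ t * r ^ n := by
  rcases eq_or_lt_of_le h0 with h0 | h0
  · refine summable_of_ne_finset_zero (s := {0}) fun n hn => ?_
    have : n ≠ 0 := by simpa using hn
    simp [← h0, zero_pow this]
  · set N := ⌈max t 0⌉₊ with hN
    have key : Summable fun n : ℕ => ((n : ℝ) + 1) ^ (N : ℕ) * r ^ n := by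
      have h2 : Summable fun n : ℕ => ((n : ℝ)) ^ (N : ℕ) * r ^ n := by
        have : ‖r‖ < 1 := by rwa [Real.norm_eq_abs, abs_of_nonneg h0.le]
        exact summable_pow_mul_geometric_of_norm_lt_one N this
      have h3 := (summable_nat_add_iff 1).2 h2
      have h4 := h3.mul_left (r⁻¹)
      refine h4.congr fun n => ?_
      push_cast
      rw [pow_succ]
      field_simp
    refine Summable.of_nonneg_of_le (fun n => ?_) (fun n => ?_) key
    · positivity
    · have hb : (1 : ℝ) ≤ (n : ℝ) + 1 := by
        have := Nat.cast_nonneg (α := ℝ) n; linarith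
      have : ((n : ℝ) + 1) ^ t ≤ ((n : ℝ) + 1) ^ (N : ℝ) :=
        Real.rpow_le_rpow_of_exponent_le hb ((le_max_left t 0).trans (Nat.le_ceil _))
      rw [Real.rpow_natCast] at this
      exact mul_le_mul_of_nonneg_right this (pow_nonneg h0.le n)

lemma memD_swap {a1 a2 : ℝ} {f : ℂ × ℂ → ℂ} (hf : MemD a1 a2 f) :
    MemD a2 a1 (fun p => f (p.2, p.1)) := by
  obtain ⟨a, hc, hs⟩ := hf
  refine ⟨fun k l => a l k, ?_, ?_⟩
  · intro p hp
    have hp' : (p.2, p.1) ∈ UnitBidisc := ⟨hp.2, hp.1⟩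
    have H := hc _ hp'
    have H2 := ((Equiv.prodComm ℕ ℕ).hasSum_iff).2 H
    have : ((fun kl : ℕ × ℕ => a kl.1 kl.2 * (p.2, p.1).1 ^ kl.1 * (p.2, p.1).2 ^ kl.2) ∘
        (Equiv.prodComm ℕ ℕ)) = fun kl : ℕ × ℕ => a kl.2 kl.1 * p.1 ^ kl.1 * p.2 ^ kl.2 := by
      funext kl
      simp [Equiv.prodComm, Function.comp]
      ring
    rw [this] at H2
    exact H2
  · have H := ((Equiv.prodComm ℕ ℕ).summable_iff).2 hs
    refine H.congr fun kl => ?_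
    simp [wt, Equiv.prodComm, Function.comp]
    ring

lemma memM_swap {a1 a2 b1 b2 : ℝ} {h : ℂ × ℂ → ℂ} (hm : MemM a1 a2 b1 b2 h) :
    MemM a2 a1 b2 b1 (fun p => h (p.2, p.1)) := by
  intro f hf
  have h1 := memD_swap (hm (fun p => f (p.2, p.1)) (memD_swap hf))
  have h2 : (fun p : ℂ × ℂ => h (p.2, p.1) * f (p.1, p.2)) =
      fun p : ℂ × ℂ => h (p.2, p.1) * f p := by
    funext p
    rw [Prod.mk.eta]
  rw [← h2]
  exact h1

lemma slice1 (a1 a2 b1 b2 : ℝ) (h : ℂ × ℂ → ℂ) (hm : MemM a1 a2 b1 b2 h) :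
    ∀ w₀ ∈ UnitDisc, MemM1 a1 b1 (fun z => h (z, w₀)) := by
  intro w₀ hw₀ g hg
  obtain ⟨b, hbc, hbs⟩ := hg
  have hr1 : ‖w₀‖ < 1 := hw₀
  have hr0 : (0 : ℝ) ≤ ‖w₀‖ := norm_nonneg _
  -- extend g to the bidisc
  set A : ℕ → ℕ → ℂ := fun k l => if l = 0 then b k else 0 with hA
  have hinj : Function.Injective (fun k : ℕ => ((k, 0) : ℕ × ℕ)) :=
    fun x y hxy => congrArg Prod.fst hxy
  have hfD : MemD a1 a2 (fun p => g p.1) := by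
    refine ⟨A, ?_, ?_⟩
    · intro p hp
      refine (Function.Injective.hasSum_iff hinj ?_).1 ?_
      · intro kl hkl
        have h2 : kl.2 ≠ 0 := by
          intro h2
          exact hkl ⟨kl.1, Prod.ext rfl h2.symm⟩
        simp [hA, h2]
      · simpa [hA, Function.comp_def] using hbc p.1 hp.1
    · refine (Function.Injective.summable_iff hinj ?_).1 ?_
      · intro kl hkl
        have h2 : kl.2 ≠ 0 := by
          intro h2
          exact hkl ⟨kl.1, Prod.ext rfl h2.symm⟩
        simp [wt, hA, h2]
      · refine hbs.congr fun k => ?_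
        simp [wt, wt1, hA, Function.comp, Real.one_rpow]
  obtain ⟨c, hcc, hcs⟩ := hm _ hfD
  -- Cauchy–Schwarz data
  set v : ℕ → ℝ := fun l => ((l : ℝ) + 1) ^ (-(b2 / 2)) * ‖w₀‖ ^ l with hv
  have hvpos : ∀ l, 0 ≤ v l := fun l =>
    mul_nonneg (Real.rpow_nonneg (by positivity) _) (pow_nonneg hr0 _)
  have hv2 : Summable fun l => v l ^ 2 := by
    have hgeo := summable_rpow_geom (-b2) (r := ‖w₀‖ ^ 2)
      (by positivity) (by nlinarith)
    refine hgeo.congr fun l => ?_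
    have hx : (0 : ℝ) ≤ (l : ℝ) + 1 := by positivity
    have h2 : (((l : ℝ) + 1) ^ (-(b2 / 2))) ^ (2 : ℕ) = ((l : ℝ) + 1) ^ (-b2) := by
      rw [← Real.rpow_natCast (((l : ℝ) + 1) ^ (-(b2 / 2))) 2, ← Real.rpow_mul hx]
      norm_num
    rw [hv, mul_pow, h2]
    congr 1
    rw [← pow_mul, mul_comm, pow_mul]
  set u : ℕ → ℕ → ℝ := fun k l => ‖c k l‖ * ((l : ℝ) + 1) ^ (b2 / 2) with hu
  have hupos : ∀ k l, 0 ≤ u k l := fun k l =>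
    mul_nonneg (norm_nonneg _) (Real.rpow_nonneg (by positivity) _)
  have hueq : ∀ k l, u k l ^ 2 = ‖c k l‖ ^ 2 * ((l : ℝ) + 1) ^ b2 := by
    intro k l
    have hx : (0 : ℝ) ≤ (l : ℝ) + 1 := by positivity
    rw [hu, mul_pow, ← Real.rpow_natCast (((l : ℝ) + 1) ^ (b2 / 2)) 2,
      ← Real.rpow_mul hx]
    norm_num
  have hKpos : ∀ k : ℕ, (0 : ℝ) < ((k : ℝ) + 1) ^ b1 := fun k =>
    Real.rpow_pos_of_pos (by positivity) _
  have hu2 : ∀ k, Summable fun l => u k l ^ 2 := by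
    intro k
    have hfib : Summable fun l => wt b1 b2 c (k, l) := hcs.prod_factor k
    have := hfib.mul_left (((k : ℝ) + 1) ^ b1)⁻¹
    refine this.congr fun l => ?_
    rw [hueq k l]
    simp only [wt]
    field_simp [ne_of_gt (hKpos k)]
  have huveq : ∀ k l, u k l * v l = ‖c k l‖ * ‖w₀‖ ^ l := by
    intro k l
    have hx : (0 : ℝ) < (l : ℝ) + 1 := by positivity
    have : ((l : ℝ) + 1) ^ (b2 / 2) * ((l : ℝ) + 1) ^ (-(b2 / 2)) = 1 := by
      rw [← Real.rpow_add hx]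
      norm_num
    rw [hu, hv]
    calc ‖c k l‖ * ((l : ℝ) + 1) ^ (b2 / 2) * (((l : ℝ) + 1) ^ (-(b2 / 2)) * ‖w₀‖ ^ l)
        = ‖c k l‖ * ‖w₀‖ ^ l *
            (((l : ℝ) + 1) ^ (b2 / 2) * ((l : ℝ) + 1) ^ (-(b2 / 2))) := by ring
      _ = ‖c k l‖ * ‖w₀‖ ^ l := by rw [this, mul_one]
  have key : ∀ k, Summable (fun l => ‖c k l‖ * ‖w₀‖ ^ l) ∧
      (∑' l, ‖c k l‖ * ‖w₀‖ ^ l) ^ 2 ≤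
        (∑' l, u k l ^ 2) * (∑' l, v l ^ 2) := by
    intro k
    obtain ⟨hs, hb⟩ := cs_tsum (u k) v (hupos k) hvpos (hu2 k) hv2
    constructor
    · exact hs.congr fun l => huveq k l
    · have : (∑' l, ‖c k l‖ * ‖w₀‖ ^ l) = ∑' l, u k l * v l :=
        tsum_congr fun l => (huveq k l).symm
      rw [this]
      exact hb
  have hcw : ∀ k, Summable fun l => c k l * w₀ ^ l := by
    intro k
    refine Summable.of_norm ?_
    refine (key k).1.congr fun l => ?_
    rw [norm_mul, norm_pow]
  refine ⟨fun k => ∑' l, c k l * w₀ ^ l, ?_, ?_⟩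
  · intro z hz
    have H := hcc (z, w₀) ⟨hz, hw₀⟩
    refine HasSum.prod_fiberwise H fun k => ?_
    have h1 := (hcw k).hasSum.mul_right (z ^ k)
    have h2 : (fun l => c k l * z ^ k * w₀ ^ l) = fun l => c k l * w₀ ^ l * z ^ k := by
      funext l; ring
    rw [h2]
    exact h1
  · set Vs := ∑' l, v l ^ 2 with hVs
    have hVs0 : 0 ≤ Vs := tsum_nonneg fun l => sq_nonneg _
    set T : ℕ → ℝ := fun k => ∑' l, wt b1 b2 c (k, l) with hT
    have hTs : Summable T :=
      (hcs.hasSum.prod_fiberwise fun k => (hcs.prod_factor k).hasSum).summable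
    refine Summable.of_nonneg_of_le (fun k => ?_) (fun k => ?_) (hTs.mul_left Vs)
    · exact mul_nonneg (pow_nonneg (norm_nonneg _) _) (Real.rpow_nonneg (by positivity) _)
    · have hnb : ‖∑' l, c k l * w₀ ^ l‖ ≤ ∑' l, ‖c k l‖ * ‖w₀‖ ^ l := by
        have := norm_tsum_le_tsum_norm (f := fun l => c k l * w₀ ^ l)
          ((key k).1.congr fun l => by rw [norm_mul, norm_pow])
        calc ‖∑' l, c k l * w₀ ^ l‖ ≤ ∑' l, ‖c k l * w₀ ^ l‖ := this
          _ = ∑' l, ‖c k l‖ * ‖w₀‖ ^ l := tsum_congr fun l => by rw [norm_mul, norm_pow]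
      have hsq : ‖∑' l, c k l * w₀ ^ l‖ ^ 2 ≤ (∑' l, u k l ^ 2) * Vs := by
        calc ‖∑' l, c k l * w₀ ^ l‖ ^ 2 ≤ (∑' l, ‖c k l‖ * ‖w₀‖ ^ l) ^ 2 :=
              pow_le_pow_left₀ (norm_nonneg _) hnb 2
          _ ≤ (∑' l, u k l ^ 2) * Vs := (key k).2
      have hTk : T k = ((k : ℝ) + 1) ^ b1 * ∑' l, u k l ^ 2 := by
        rw [hT, ← tsum_mul_left]
        refine tsum_congr fun l => ?_
        rw [hueq k l]
        simp only [wt]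
        ring
      calc wt1 b1 (fun k => ∑' l, c k l * w₀ ^ l) k
          = ‖∑' l, c k l * w₀ ^ l‖ ^ 2 * ((k : ℝ) + 1) ^ b1 := rfl
        _ ≤ (∑' l, u k l ^ 2) * Vs * ((k : ℝ) + 1) ^ b1 :=
            mul_le_mul_of_nonneg_right hsq (hKpos k).le
        _ = Vs * T k := by rw [hTk]; ring

/-- slices of multipliers are multipliers of the corresponding
one-variable spaces. -/
theorem stmt19 (a1 a2 b1 b2 : ℝ) (h : ℂ × ℂ → ℂ)
    (hm : MemM a1 a2 b1 b2 h) :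
    (∀ w₀ ∈ UnitDisc, MemM1 a1 b1 (fun z => h (z, w₀))) ∧
    (∀ z₀ ∈ UnitDisc, MemM1 a2 b2 (fun w => h (z₀, w))) := by
  refine ⟨slice1 a1 a2 b1 b2 h hm, ?_⟩
  intro z₀ hz₀
  exact slice1 a2 a1 b2 b1 (fun p => h (p.2, p.1)) (memM_swap hm) z₀ hz₀
end
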